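/- arXiv:2012.02843 — 8 statements merged into one kernel-verified Lean document; each statement's English description precedes it below -/
import Mathlib

section
/- Let d ≥ 3 and p > d. There exists a constant C > 0 depending only on d and p such that for every measurable vector field b : ℝ^d → ℝ^d with |b| ∈ L^p(ℝ^d) and every h > 0, the elliptic Nash norm satisfies n_e(b,h) ≤ C · (2p/(p−d)) · h^{(p−d)/(2p)} · ‖|b|‖_{L^p}. In particular, every vector field with |b| ∈ L^p(ℝ^d), p > d, belongs to the Nash class N_e. -/
open MeasureTheory ENNReal

noncomputable section

/-- `ℝ^d` as a Euclidean space. -/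
abbrev E (d : ℕ) := EuclideanSpace ℝ (Fin d)

/-- The Gaussian kernel `k_μ(t,x) = (4πμt)^{-d/2} exp(-|x|²/(4μt))`. -/
def gaussK (d : ℕ) (μ t : ℝ) (x : E d) : ℝ :=
  (4 * Real.pi * μ * t) ^ (-(d : ℝ) / 2) * Real.exp (-‖x‖ ^ 2 / (4 * μ * t))

/-- The heat semigroup `e^{tΔ}` applied to a nonnegative (extended-real valued)
function `g`, with values in `[0,∞]`. -/
def heatSem (d : ℕ) (t : ℝ) (g : E d → ℝ≥0∞) (x : E d) : ℝ≥0∞ :=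
  ∫⁻ y, ENNReal.ofReal (gaussK d 1 t (x - y)) * g y

/-- `|b|²` as an `ℝ≥0∞`-valued function. -/
def bsq (d : ℕ) (b : E d → E d) : E d → ℝ≥0∞ := fun y => ENNReal.ofReal (‖b y‖ ^ 2)

/-- The elliptic Nash norm `n_e(b,h)`. -/
def nashNorm (d : ℕ) (b : E d → E d) (h : ℝ) : ℝ≥0∞ :=
  ⨆ x : E d, ∫⁻ t in Set.Ioc (0 : ℝ) h,
    (heatSem d t (bsq d b) x) ^ (1 / 2 : ℝ) * ENNReal.ofReal (t ^ (-(1 : ℝ) / 2))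

section Aux

open Real

lemma gaussK_def (d : ℕ) (t : ℝ) (z : E d) :
    gaussK d 1 t z = (4 * π * t) ^ (-(d : ℝ) / 2) * rexp (-(1 / (4 * t)) * ‖z‖ ^ 2) := by
  unfold gaussK
  rw [mul_one, show -‖z‖ ^ 2 / (4 * 1 * t) = -(1 / (4 * t)) * ‖z‖ ^ 2 by ring]

lemma gaussK_meas (d : ℕ) (t : ℝ) : Measurable fun z : E d => gaussK d 1 t z := by
  unfold gaussK; fun_prop

lemma gaussK_le (d : ℕ) {t : ℝ} (ht : 0 < t) (z : E d) :
    gaussK d 1 t z ≤ (4 * π * t) ^ (-(d : ℝ) / 2) := by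
  rw [gaussK_def]
  have h1 : rexp (-(1 / (4 * t)) * ‖z‖ ^ 2) ≤ 1 := by
    rw [Real.exp_le_one_iff]
    have : (0:ℝ) ≤ (1 / (4 * t)) * ‖z‖ ^ 2 := by positivity
    nlinarith
  have h0 : (0:ℝ) ≤ (4 * π * t) ^ (-(d : ℝ) / 2) := by positivity
  nlinarith [Real.exp_pos (-(1 / (4 * t)) * ‖z‖ ^ 2)]

lemma gauss_integrable (d : ℕ) {t : ℝ} (ht : 0 < t) :
    Integrable (fun z : E d => rexp (-(1 / (4 * t)) * ‖z‖ ^ 2)) := by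
  have hb : (0:ℝ) < 1 / (4 * t) := by positivity
  have h := (GaussianFourier.integrable_cexp_neg_mul_sq_norm_add
    (b := ((1 / (4 * t) : ℝ) : ℂ)) (by simpa using hb) 0 (0 : E d)).norm
  refine h.congr (Filter.Eventually.of_forall fun z => ?_)
  simp only [zero_mul, add_zero, Complex.norm_exp]
  congr 1
  rw [show (-(((1 / (4 * t) : ℝ)) : ℂ) * (‖z‖:ℂ) ^ 2 : ℂ)
      = ((-(1 / (4 * t)) * ‖z‖ ^ 2 : ℝ) : ℂ) by push_cast; ring, Complex.ofReal_re]

lemma gauss_integral (d : ℕ) {t : ℝ} (ht : 0 < t) :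
    ∫ z : E d, rexp (-(1 / (4 * t)) * ‖z‖ ^ 2) = (4 * π * t) ^ ((d : ℝ) / 2) := by
  have hb : (0:ℝ) < 1 / (4 * t) := by positivity
  rw [GaussianFourier.integral_rexp_neg_mul_sq_norm hb]
  rw [show Module.finrank ℝ (E d) = d from finrank_euclideanSpace_fin]
  congr 1
  field_simp

lemma lintegral_gaussK (d : ℕ) {t : ℝ} (ht : 0 < t) (x : E d) :
    ∫⁻ y, ENNReal.ofReal (gaussK d 1 t (x - y)) = 1 := by
  have hm : Measurable fun z : E d => ENNReal.ofReal (gaussK d 1 t z) :=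
    (gaussK_meas d t).ennreal_ofReal
  have h1 : ∫⁻ y, ENNReal.ofReal (gaussK d 1 t (x - y)) =
      ∫⁻ z, ENNReal.ofReal (gaussK d 1 t z) :=
    (Measure.measurePreserving_sub_left volume x).lintegral_comp hm
  rw [h1]
  have hint : Integrable (fun z : E d => gaussK d 1 t z) := by
    simp only [gaussK_def]
    exact (gauss_integrable d ht).const_mul _
  have hnn : 0 ≤ᵐ[(volume : Measure (E d))] fun z => gaussK d 1 t z := by
    refine Filter.Eventually.of_forall fun z => ?_
    show 0 ≤ gaussK d 1 t z
    rw [gaussK_def]; positivity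
  rw [← ofReal_integral_eq_lintegral_ofReal hint hnn]
  simp only [gaussK_def]
  rw [integral_const_mul, gauss_integral d ht, ← Real.rpow_add (by positivity),
    show -(d:ℝ)/2 + (d:ℝ)/2 = 0 by ring, Real.rpow_zero, ENNReal.ofReal_one]

lemma sq_le_aux {x M p : ℝ} (hM : 0 < M) (hp : 2 < p) (hx : 0 ≤ x) :
    x ^ 2 ≤ M ^ 2 + M ^ (2 - p) * x ^ p := by
  rcases le_or_gt x M with h | h
  · have h2 : x ^ 2 ≤ M ^ 2 := by nlinarith
    have h3 : 0 ≤ M ^ (2 - p) * x ^ p :=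
      mul_nonneg (Real.rpow_nonneg hM.le _) (Real.rpow_nonneg hx _)
    linarith
  · have hx0 : 0 < x := hM.trans h
    have e1 : x ^ 2 = x ^ (2 - p) * x ^ p := by
      rw [← Real.rpow_add hx0, sub_add_cancel, Real.rpow_two]
    have e2 : x ^ (2 - p) ≤ M ^ (2 - p) :=
      Real.rpow_le_rpow_of_nonpos hM h.le (by linarith)
    have e3 : x ^ (2 - p) * x ^ p ≤ M ^ (2 - p) * x ^ p :=
      mul_le_mul_of_nonneg_right e2 (Real.rpow_nonneg hx0.le _)
    nlinarith [sq_nonneg M]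

lemma alg_id (d : ℕ) {p t N : ℝ} (hp0 : 0 < p) (ht : 0 < t) (hN : 0 < N) :
    (t ^ (-(d : ℝ) / (2 * p)) * N) ^ 2
      + (4 * π * t) ^ (-(d : ℝ) / 2) * (t ^ (-(d : ℝ) / (2 * p)) * N) ^ (2 - p) * N ^ p
    = (1 + (4 * π) ^ (-(d : ℝ) / 2)) * t ^ (-(d : ℝ) / p) * N ^ 2 := by
  have hT : (0:ℝ) < t ^ (-(d : ℝ) / (2 * p)) := Real.rpow_pos_of_pos ht _
  have h1 : (t ^ (-(d : ℝ) / (2 * p)) * N) ^ 2 = t ^ (-(d : ℝ) / p) * N ^ 2 := by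
    rw [mul_pow, ← Real.rpow_two (t ^ (-(d : ℝ) / (2 * p))), ← Real.rpow_mul ht.le,
      show -(d : ℝ) / (2 * p) * 2 = -(d : ℝ) / p by ring]
  have h2 : (t ^ (-(d : ℝ) / (2 * p)) * N) ^ (2 - p)
      = t ^ ((-(d : ℝ) / (2 * p)) * (2 - p)) * N ^ (2 - p) := by
    rw [Real.mul_rpow hT.le hN.le, ← Real.rpow_mul ht.le]
  have h3 : N ^ (2 - p) * N ^ p = N ^ 2 := by
    rw [← Real.rpow_add hN, sub_add_cancel, Real.rpow_two]
  have h4 : t ^ (-(d : ℝ) / 2) * t ^ ((-(d : ℝ) / (2 * p)) * (2 - p)) = t ^ (-(d : ℝ) / p) := by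
    rw [← Real.rpow_add ht,
      show -(d:ℝ)/2 + -(d : ℝ) / (2 * p) * (2 - p) = -(d:ℝ)/p by field_simp; ring]
  rw [h1, Real.mul_rpow (by positivity : (0:ℝ) ≤ 4 * π) ht.le, h2]
  have key : (4 * π) ^ (-(d : ℝ) / 2) * t ^ (-(d : ℝ) / 2)
      * (t ^ ((-(d : ℝ) / (2 * p)) * (2 - p)) * N ^ (2 - p)) * N ^ p
      = (4 * π) ^ (-(d : ℝ) / 2) * t ^ (-(d : ℝ) / p) * N ^ 2 := by
    calc (4 * π) ^ (-(d : ℝ) / 2) * t ^ (-(d : ℝ) / 2)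
        * (t ^ ((-(d : ℝ) / (2 * p)) * (2 - p)) * N ^ (2 - p)) * N ^ p
        = (4 * π) ^ (-(d : ℝ) / 2)
          * (t ^ (-(d : ℝ) / 2) * t ^ ((-(d : ℝ) / (2 * p)) * (2 - p)))
          * (N ^ (2 - p) * N ^ p) := by ring
      _ = _ := by rw [h3, h4]
  linear_combination key

lemma sqrt_id (d : ℕ) {p t N : ℝ} (hp0 : 0 < p) (ht : 0 < t) (hN : 0 < N) :
    ((1 + (4 * π) ^ (-(d : ℝ) / 2)) * t ^ (-(d : ℝ) / p) * N ^ 2) ^ (1/2 : ℝ)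
      = (1 + (4 * π) ^ (-(d : ℝ) / 2)) ^ (1/2 : ℝ) * t ^ (-(d : ℝ) / (2 * p)) * N := by
  have hA : (0:ℝ) ≤ 1 + (4 * π) ^ (-(d : ℝ) / 2) := by positivity
  have hB : (0:ℝ) ≤ t ^ (-(d : ℝ) / p) := Real.rpow_nonneg ht.le _
  rw [Real.mul_rpow (by positivity) (by positivity), Real.mul_rpow hA hB,
    ← Real.rpow_mul ht.le, show -(d : ℝ) / p * (1 / 2) = -(d : ℝ) / (2 * p) by ring,
    ← Real.rpow_two N, ← Real.rpow_mul hN.le,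
    show (2 : ℝ) * (1 / 2) = 1 by norm_num, Real.rpow_one]

/-- The main pointwise heat kernel bound. -/
lemma heat_sqrt_bound (d : ℕ) {p : ℝ} (hp2 : 2 < p) (b : E d → E d) (hb : Measurable b)
    {t : ℝ} (ht : 0 < t) {N : ℝ} (hN : 0 < N)
    (hLp : ∫⁻ y, ENNReal.ofReal (‖b y‖ ^ p) ≤ ENNReal.ofReal (N ^ p)) (x : E d) :
    (heatSem d t (bsq d b) x) ^ (1/2 : ℝ) ≤
      ENNReal.ofReal ((1 + (4 * π) ^ (-(d : ℝ) / 2)) ^ (1/2 : ℝ)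
        * t ^ (-(d : ℝ) / (2 * p)) * N) := by
  have hp0 : (0:ℝ) < p := by linarith
  set M : ℝ := t ^ (-(d : ℝ) / (2 * p)) * N with hMdef
  have hM : 0 < M := by positivity
  have hkmeas : Measurable fun y : E d => ENNReal.ofReal (gaussK d 1 t (x - y)) :=
    ((gaussK_meas d t).comp (measurable_const.sub measurable_id)).ennreal_ofReal
  have hstep : heatSem d t (bsq d b) x ≤
      ENNReal.ofReal ((1 + (4 * π) ^ (-(d : ℝ) / 2)) * t ^ (-(d : ℝ) / p) * N ^ 2) := by
    have hpt : ∀ y, ENNReal.ofReal (gaussK d 1 t (x - y)) * bsq d b y ≤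
        ENNReal.ofReal (gaussK d 1 t (x - y)) * ENNReal.ofReal (M ^ 2) +
        ENNReal.ofReal ((4 * π * t) ^ (-(d : ℝ) / 2) * M ^ (2 - p))
          * ENNReal.ofReal (‖b y‖ ^ p) := by
      intro y
      have hb1 : bsq d b y ≤ ENNReal.ofReal (M ^ 2) +
          ENNReal.ofReal (M ^ (2 - p)) * ENNReal.ofReal (‖b y‖ ^ p) := by
        rw [← ENNReal.ofReal_mul (Real.rpow_nonneg hM.le _), ← ENNReal.ofReal_add (by positivity)
          (mul_nonneg (Real.rpow_nonneg hM.le _) (Real.rpow_nonneg (norm_nonneg _) _))]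
        exact ENNReal.ofReal_le_ofReal (sq_le_aux hM hp2 (norm_nonneg _))
      calc ENNReal.ofReal (gaussK d 1 t (x - y)) * bsq d b y
          ≤ ENNReal.ofReal (gaussK d 1 t (x - y)) * (ENNReal.ofReal (M ^ 2) +
            ENNReal.ofReal (M ^ (2 - p)) * ENNReal.ofReal (‖b y‖ ^ p)) :=
            mul_le_mul_right hb1 _
        _ = ENNReal.ofReal (gaussK d 1 t (x - y)) * ENNReal.ofReal (M ^ 2) +
            ENNReal.ofReal (gaussK d 1 t (x - y)) *
              (ENNReal.ofReal (M ^ (2 - p)) * ENNReal.ofReal (‖b y‖ ^ p)) := by ring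
        _ ≤ ENNReal.ofReal (gaussK d 1 t (x - y)) * ENNReal.ofReal (M ^ 2) +
            ENNReal.ofReal ((4 * π * t) ^ (-(d : ℝ) / 2)) *
              (ENNReal.ofReal (M ^ (2 - p)) * ENNReal.ofReal (‖b y‖ ^ p)) := by
            gcongr
            exact gaussK_le d ht _
        _ = ENNReal.ofReal ((4 * π * t) ^ (-(d : ℝ) / 2) * M ^ (2 - p))
              * ENNReal.ofReal (‖b y‖ ^ p) +
            ENNReal.ofReal (gaussK d 1 t (x - y)) * ENNReal.ofReal (M ^ 2) := by
            rw [ENNReal.ofReal_mul (by positivity)]; ring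
        _ = _ := by ring
    calc heatSem d t (bsq d b) x
        ≤ ∫⁻ y, (ENNReal.ofReal (gaussK d 1 t (x - y)) * ENNReal.ofReal (M ^ 2) +
            ENNReal.ofReal ((4 * π * t) ^ (-(d : ℝ) / 2) * M ^ (2 - p))
              * ENNReal.ofReal (‖b y‖ ^ p)) := lintegral_mono hpt
      _ = (∫⁻ y, ENNReal.ofReal (gaussK d 1 t (x - y)) * ENNReal.ofReal (M ^ 2)) +
          ∫⁻ y, ENNReal.ofReal ((4 * π * t) ^ (-(d : ℝ) / 2) * M ^ (2 - p))
            * ENNReal.ofReal (‖b y‖ ^ p) :=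
          lintegral_add_left (hkmeas.mul_const _) _
      _ = ENNReal.ofReal (M ^ 2) +
          ENNReal.ofReal ((4 * π * t) ^ (-(d : ℝ) / 2) * M ^ (2 - p)) *
            ∫⁻ y, ENNReal.ofReal (‖b y‖ ^ p) := by
          rw [lintegral_mul_const' _ _ ENNReal.ofReal_ne_top,
            lintegral_const_mul' _ _ ENNReal.ofReal_ne_top, lintegral_gaussK d ht x, one_mul]
      _ ≤ ENNReal.ofReal (M ^ 2) +
          ENNReal.ofReal ((4 * π * t) ^ (-(d : ℝ) / 2) * M ^ (2 - p)) *
            ENNReal.ofReal (N ^ p) := by gcongr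
      _ = ENNReal.ofReal (M ^ 2 + (4 * π * t) ^ (-(d : ℝ) / 2) * M ^ (2 - p) * N ^ p) := by
          rw [← ENNReal.ofReal_mul (by positivity), ← ENNReal.ofReal_add (by positivity)
            (by positivity)]
      _ = _ := by rw [hMdef, alg_id d hp0 ht hN]
  calc (heatSem d t (bsq d b) x) ^ (1/2 : ℝ)
      ≤ (ENNReal.ofReal ((1 + (4 * π) ^ (-(d : ℝ) / 2)) * t ^ (-(d : ℝ) / p) * N ^ 2))
          ^ (1/2 : ℝ) := ENNReal.rpow_le_rpow hstep (by norm_num)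
    _ = ENNReal.ofReal (((1 + (4 * π) ^ (-(d : ℝ) / 2)) * t ^ (-(d : ℝ) / p) * N ^ 2)
          ^ (1/2 : ℝ)) := ENNReal.ofReal_rpow_of_nonneg (by positivity) (by norm_num)
    _ = _ := by rw [sqrt_id d hp0 ht hN]

lemma time_int {r h : ℝ} (hr : -1 < r) (hh : 0 < h) :
    ∫⁻ t in Set.Ioc (0:ℝ) h, ENNReal.ofReal (t ^ r)
      = ENNReal.ofReal (h ^ (r + 1) / (r + 1)) := by
  have hint : IntegrableOn (fun t : ℝ => t ^ r) (Set.Ioc 0 h) :=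
    (intervalIntegral.intervalIntegrable_rpow' hr).1
  have hnn : 0 ≤ᵐ[(volume : Measure ℝ).restrict (Set.Ioc 0 h)] fun t : ℝ => t ^ r :=
    (ae_restrict_iff' measurableSet_Ioc).2
      (Filter.Eventually.of_forall fun t ht => Real.rpow_nonneg ht.1.le r)
  rw [← ofReal_integral_eq_lintegral_ofReal hint hnn]
  congr 1
  rw [← intervalIntegral.integral_of_le hh.le, integral_rpow (Or.inl hr),
    Real.zero_rpow (by linarith), sub_zero]

end Aux

/-- For `d ≥ 3` and `p > d` there is a constant `C > 0` depending only on
`d` and `p` such that for every measurable vector field `b` with `|b| ∈ L^p` and every `h > 0`,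
`n_e(b,h) ≤ C · (2p/(p−d)) · h^{(p−d)/(2p)} · ‖b‖_{L^p}`; in particular every such `b`
belongs to the Nash class `N_e`. -/
theorem nash_norm_of_Lp (d : ℕ) (hd : 3 ≤ d) (p : ℝ) (hp : (d : ℝ) < p) :
    ∃ C > (0 : ℝ), ∀ b : E d → E d, Measurable b →
      MemLp b (ENNReal.ofReal p) volume → ∀ h > (0 : ℝ),
        nashNorm d b h ≤
          ENNReal.ofReal (C * (2 * p / (p - d)) * h ^ ((p - d) / (2 * p)))
            * eLpNorm b (ENNReal.ofReal p) volume
        ∧ nashNorm d b h < ⊤ := by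
  have hd3 : (3:ℝ) ≤ (d:ℝ) := by exact_mod_cast hd
  have hp2 : (2:ℝ) < p := by linarith
  have hp0 : (0:ℝ) < p := by linarith
  have hpd : (0:ℝ) < p - d := by linarith
  refine ⟨(1 + (4 * Real.pi) ^ (-(d : ℝ) / 2)) ^ (1/2 : ℝ), by positivity, ?_⟩
  intro b hb hmem h hh
  set C0 : ℝ := (1 + (4 * Real.pi) ^ (-(d : ℝ) / 2)) ^ (1/2 : ℝ) with hC0def
  have hC0 : 0 < C0 := by rw [hC0def]; positivity
  set q := ENNReal.ofReal p with hqdef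
  have hq0 : q ≠ 0 := by
    simp [hqdef, ENNReal.ofReal_eq_zero, not_le, hp0]
  have hqt : q ≠ ⊤ := ENNReal.ofReal_ne_top
  have hqr : q.toReal = p := ENNReal.toReal_ofReal hp0.le
  set Np := eLpNorm b q volume with hNpdef
  have hNpt : Np ≠ ⊤ := hmem.2.ne
  by_cases hN0 : Np = 0
  · -- degenerate case : `b = 0` a.e.
    have hb0 : b =ᵐ[volume] 0 := by
      rw [hNpdef] at hN0
      rwa [eLpNorm_eq_zero_iff hb.aestronglyMeasurable hq0] at hN0
    have hheat : ∀ t : ℝ, ∀ x : E d, heatSem d t (bsq d b) x = 0 := by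
      intro t x
      unfold heatSem
      have : (fun y => ENNReal.ofReal (gaussK d 1 t (x - y)) * bsq d b y)
          =ᵐ[volume] fun _ => 0 := by
        filter_upwards [hb0] with y hy
        simp [bsq, hy]
      rw [lintegral_congr_ae this, lintegral_zero]
    have hnash : nashNorm d b h = 0 := by
      unfold nashNorm
      refine le_antisymm (iSup_le fun x => ?_) zero_le
      simp [hheat, ENNReal.zero_rpow_of_pos (by norm_num : (0:ℝ) < 1/2)]
    rw [hnash]
    exact ⟨zero_le, by simp⟩
  · set N := Np.toReal with hNdef
    have hN : 0 < N := ENNReal.toReal_pos hN0 hNpt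
    have hNp_eq : Np = ENNReal.ofReal N := (ENNReal.ofReal_toReal hNpt).symm
    have hLp : ∫⁻ y, ENNReal.ofReal (‖b y‖ ^ p) ≤ ENNReal.ofReal (N ^ p) := by
      have h1 : ∀ y, ENNReal.ofReal (‖b y‖ ^ p) = (‖b y‖₊ : ℝ≥0∞) ^ p := fun y => by
        rw [← ENNReal.ofReal_rpow_of_nonneg (norm_nonneg _) hp0.le, ← coe_nnnorm, ENNReal.ofReal_coe_nnreal]
      have h2 : ∫⁻ y, (‖b y‖₊ : ℝ≥0∞) ^ p = Np ^ p := by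
        simp only [← enorm_eq_nnnorm]
        rw [hNpdef, eLpNorm_eq_lintegral_rpow_enorm_toReal hq0 hqt, hqr, ← ENNReal.rpow_mul,
          one_div, inv_mul_cancel₀ hp0.ne', ENNReal.rpow_one]
      simp_rw [h1]
      rw [h2, hNp_eq, ← ENNReal.ofReal_rpow_of_nonneg ENNReal.toReal_nonneg hp0.le]
    set r : ℝ := -(d : ℝ) / (2 * p) + -1 / 2 with hrdef
    have hr1 : -1 < r := by
      rw [hrdef]
      have : (d:ℝ) / (2 * p) < 1 / 2 := by
        rw [div_lt_div_iff₀ (by positivity) (by norm_num)]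
        linarith
      have hdd : -(d:ℝ) / (2 * p) = -((d:ℝ) / (2 * p)) := by ring
      linarith [this]
    have hra : r + 1 = (p - d) / (2 * p) := by
      rw [hrdef]; field_simp; ring
    have hbound : ∀ x : E d, (∫⁻ t in Set.Ioc (0 : ℝ) h,
        (heatSem d t (bsq d b) x) ^ (1 / 2 : ℝ) * ENNReal.ofReal (t ^ (-(1 : ℝ) / 2)))
        ≤ ENNReal.ofReal (C0 * (2 * p / (p - d)) * h ^ ((p - d) / (2 * p))) * Np := by
      intro x
      have step1 : (∫⁻ t in Set.Ioc (0 : ℝ) h,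
          (heatSem d t (bsq d b) x) ^ (1 / 2 : ℝ) * ENNReal.ofReal (t ^ (-(1 : ℝ) / 2)))
          ≤ ∫⁻ t in Set.Ioc (0 : ℝ) h, ENNReal.ofReal (C0 * N) * ENNReal.ofReal (t ^ r) := by
        refine setLIntegral_mono' measurableSet_Ioc fun t ht => ?_
        have ht0 : 0 < t := ht.1
        have hhb := heat_sqrt_bound d hp2 b hb ht0 hN hLp x
        calc (heatSem d t (bsq d b) x) ^ (1 / 2 : ℝ) * ENNReal.ofReal (t ^ (-(1 : ℝ) / 2))
            ≤ ENNReal.ofReal (C0 * t ^ (-(d : ℝ) / (2 * p)) * N)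
              * ENNReal.ofReal (t ^ (-(1 : ℝ) / 2)) := mul_le_mul_left hhb _
          _ = ENNReal.ofReal (C0 * N) * ENNReal.ofReal (t ^ r) := by
              rw [← ENNReal.ofReal_mul (by positivity), ← ENNReal.ofReal_mul (by positivity)]
              congr 1
              rw [hrdef, Real.rpow_add ht0]
              ring
      have step2 : (∫⁻ t in Set.Ioc (0 : ℝ) h,
          ENNReal.ofReal (C0 * N) * ENNReal.ofReal (t ^ r))
          = ENNReal.ofReal (C0 * N) * ENNReal.ofReal (h ^ (r + 1) / (r + 1)) := by
        rw [lintegral_const_mul' _ _ ENNReal.ofReal_ne_top, time_int hr1 hh]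
      refine step1.trans (le_of_eq ?_)
      rw [step2, hNp_eq, ← ENNReal.ofReal_mul (by positivity),
        ← ENNReal.ofReal_mul (by positivity)]
      congr 1
      rw [hra]
      have hap : (0:ℝ) < (p - d) / (2 * p) := by positivity
      field_simp
    constructor
    · exact iSup_le hbound
    · refine lt_of_le_of_lt (iSup_le hbound) ?_
      exact ENNReal.mul_lt_top ENNReal.ofReal_lt_top hNpt.lt_top
end
end

section
/- Let d ≥ 1, let 0 < 2δ < λ, let 0 < ε < 1, and let s < τ < t be real numbers with 0 < τ − s < (t − s)ε. Set c₋ := (1−ε)^{-d/2} (λ/(λ−2δ))^{d/4}. Then for all x, y, z ∈ ℝ^d: k_λ(t−τ, x−z)² · k_δ(τ−s, y−z) ≤ c₋² · k_{λδ/(λ−2δ)}(τ−s, y−z) · k_λ(t−s, x−y)². -/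
open MeasureTheory ENNReal

noncomputable section

/-- (`a₄⁻`) For `0 < 2δ < λ`, `0 < ε < 1`, `s < τ < t` with
`τ − s < (t − s)ε` and `c₋ = (1−ε)^{-d/2}(λ/(λ−2δ))^{d/4}`:
`k_λ(t−τ,x−z)² k_δ(τ−s,y−z) ≤ c₋² k_{λδ/(λ−2δ)}(τ−s,y−z) k_λ(t−s,x−y)²`. -/
theorem gauss_a4_minus (d : ℕ) (hd : 1 ≤ d) (δ lam ε s τ t : ℝ)
    (hδ : 0 < 2 * δ) (hdl : 2 * δ < lam) (hε0 : 0 < ε) (hε1 : ε < 1)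
    (hsτ : s < τ) (hτt : τ < t) (hτs : τ - s < (t - s) * ε) (x y z : E d) :
    gaussK d lam (t - τ) (x - z) ^ 2 * gaussK d δ (τ - s) (y - z)
      ≤ ((1 - ε) ^ (-(d : ℝ) / 2) * (lam / (lam - 2 * δ)) ^ ((d : ℝ) / 4)) ^ 2
        * gaussK d (lam * δ / (lam - 2 * δ)) (τ - s) (y - z)
        * gaussK d lam (t - s) (x - y) ^ 2 := by
  have hδ0 : 0 < δ := by linarith
  have hl : 0 < lam := by linarith
  have hl2 : 0 < lam - 2 * δ := by linarith
  have hε : 0 < 1 - ε := by linarith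
  have hπ : 0 < Real.pi := Real.pi_pos
  have hA : 0 < t - τ := by linarith
  have hB : 0 < τ - s := by linarith
  set A := t - τ with hA'
  set B := τ - s with hB'
  have hT : t - s = A + B := by rw [hA', hB']; ring
  set μ := lam * δ / (lam - 2 * δ) with hμ'
  have hμ : 0 < μ := by positivity
  have he : -(d : ℝ) / 2 ≤ 0 := by
    have : (0:ℝ) ≤ (d : ℝ) / 2 := by positivity
    linarith
  simp only [gaussK]
  rw [hT]
  set e := -(d : ℝ) / 2 with he'
  set p := ‖x - z‖ with hp'
  set q := ‖y - z‖ with hq'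
  set c := ‖x - y‖ with hc'
  have hp0 : 0 ≤ p := norm_nonneg _
  have hq0 : 0 ≤ q := norm_nonneg _
  have hc0 : 0 ≤ c := norm_nonneg _
  have hcpq : c ≤ p + q := by
    rw [hc', hp', hq']
    calc ‖x - y‖ = ‖(x - z) - (y - z)‖ := by rw [sub_sub_sub_cancel_right]
      _ ≤ ‖x - z‖ + ‖y - z‖ := norm_sub_le _ _
  -- prefactor inequality
  have hPb : (4 * Real.pi * δ * B) ^ e = (4 * Real.pi * μ * B) ^ e * ((lam - 2*δ)/lam) ^ e := by
    rw [← Real.mul_rpow (by positivity) (by positivity)]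
    congr 1
    rw [hμ']
    field_simp
    rw [div_self (by linarith : (0:ℝ) < lam - δ * 2).ne']
  have hPa : (4 * Real.pi * lam * A) ^ e ≤ (1 - ε) ^ e * (4 * Real.pi * lam * (A + B)) ^ e := by
    rw [← Real.mul_rpow hε.le (by positivity)]
    apply Real.rpow_le_rpow_of_nonpos (by positivity) _ he
    have h1 : (1 - ε) * (A + B) ≤ A := by nlinarith [hτs, hT]
    nlinarith [mul_pos hπ hl, mul_pos (mul_pos hπ hl) hB]
  have hCsq : ((1 - ε) ^ e * (lam / (lam - 2 * δ)) ^ ((d : ℝ) / 4)) ^ 2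
      = ((1 - ε) ^ e) ^ 2 * ((lam - 2*δ)/lam) ^ e := by
    rw [mul_pow]
    congr 1
    rw [← Real.rpow_natCast ((lam / (lam - 2 * δ)) ^ ((d : ℝ) / 4)) 2,
      ← Real.rpow_mul (by positivity)]
    rw [show (lam - 2*δ)/lam = (lam / (lam - 2 * δ))⁻¹ by rw [inv_div],
      Real.inv_rpow (by positivity), ← Real.rpow_neg (by positivity)]
    congr 1
    rw [he']
    push_cast
    ring
  have hPre : ((4 * Real.pi * lam * A) ^ e) ^ 2 * (4 * Real.pi * δ * B) ^ e
      ≤ ((1 - ε) ^ e * (lam / (lam - 2 * δ)) ^ ((d : ℝ) / 4)) ^ 2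
        * ((4 * Real.pi * μ * B) ^ e * ((4 * Real.pi * lam * (A + B)) ^ e) ^ 2) := by
    rw [hPb, hCsq]
    have h2 : ((4 * Real.pi * lam * A) ^ e) ^ 2
        ≤ ((1 - ε) ^ e) ^ 2 * ((4 * Real.pi * lam * (A + B)) ^ e) ^ 2 := by
      rw [← mul_pow]
      exact pow_le_pow_left₀ (by positivity) hPa 2
    calc ((4 * Real.pi * lam * A) ^ e) ^ 2 * ((4 * Real.pi * μ * B) ^ e * ((lam - 2*δ)/lam) ^ e)
        ≤ (((1 - ε) ^ e) ^ 2 * ((4 * Real.pi * lam * (A + B)) ^ e) ^ 2)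
          * ((4 * Real.pi * μ * B) ^ e * ((lam - 2*δ)/lam) ^ e) := by
          exact mul_le_mul_of_nonneg_right h2 (by positivity)
      _ = ((1 - ε) ^ e) ^ 2 * ((lam - 2*δ)/lam) ^ e
          * ((4 * Real.pi * μ * B) ^ e * ((4 * Real.pi * lam * (A + B)) ^ e) ^ 2) := by ring
  -- exponential inequality
  have hkey : p^2/(4*lam*A) + p^2/(4*lam*A) + q^2/(4*δ*B)
      - (q^2/(4*μ*B) + ((p+q)^2/(4*lam*(A+B)) + (p+q)^2/(4*lam*(A+B))))
      = (B*p - A*q)^2 / (2*lam*A*B*(A+B)) := by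
    rw [hμ']
    field_simp
    ring
  have hcc : c^2/(4*lam*(A+B)) ≤ (p+q)^2/(4*lam*(A+B)) := by
    gcongr
  have hExp : Real.exp (-p ^ 2 / (4 * lam * A)) ^ 2 * Real.exp (-q ^ 2 / (4 * δ * B))
      ≤ Real.exp (-q ^ 2 / (4 * μ * B)) * Real.exp (-c ^ 2 / (4 * lam * (A + B))) ^ 2 := by
    have hsq : ∀ u : ℝ, Real.exp u ^ 2 = Real.exp (2 * u) := fun u => by
      rw [← Real.exp_nat_mul]; norm_num
    simp only [hsq, ← Real.exp_add]
    apply Real.exp_le_exp.mpr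
    have hw : 0 ≤ (B*p - A*q)^2 / (2*lam*A*B*(A+B)) := by positivity
    have h3 : -p ^ 2 / (4 * lam * A) = -(p^2/(4*lam*A)) := by ring
    have h4 : -q ^ 2 / (4 * δ * B) = -(q^2/(4*δ*B)) := by ring
    have h5 : -q ^ 2 / (4 * μ * B) = -(q^2/(4*μ*B)) := by ring
    have h6 : -c ^ 2 / (4 * lam * (A + B)) = -(c^2/(4*lam*(A+B))) := by ring
    rw [h3, h4, h5, h6]
    linarith [hkey, hw, hcc]
  calc ((4 * Real.pi * lam * A) ^ e * Real.exp (-p ^ 2 / (4 * lam * A))) ^ 2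
        * ((4 * Real.pi * δ * B) ^ e * Real.exp (-q ^ 2 / (4 * δ * B)))
      = (((4 * Real.pi * lam * A) ^ e) ^ 2 * (4 * Real.pi * δ * B) ^ e)
        * (Real.exp (-p ^ 2 / (4 * lam * A)) ^ 2 * Real.exp (-q ^ 2 / (4 * δ * B))) := by ring
    _ ≤ (((1 - ε) ^ e * (lam / (lam - 2 * δ)) ^ ((d : ℝ) / 4)) ^ 2
          * ((4 * Real.pi * μ * B) ^ e * ((4 * Real.pi * lam * (A + B)) ^ e) ^ 2))
        * (Real.exp (-q ^ 2 / (4 * μ * B)) * Real.exp (-c ^ 2 / (4 * lam * (A + B))) ^ 2) :=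
        mul_le_mul hPre hExp (by positivity) (by positivity)
    _ = ((1 - ε) ^ e * (lam / (lam - 2 * δ)) ^ ((d : ℝ) / 4)) ^ 2
          * ((4 * Real.pi * μ * B) ^ e * Real.exp (-q ^ 2 / (4 * μ * B)))
          * ((4 * Real.pi * lam * (A + B)) ^ e * Real.exp (-c ^ 2 / (4 * lam * (A + B)))) ^ 2 := by
        ring
end
end

section
/- Let d ≥ 1, let 0 < 2δ < λ, let λ/(2(λ−δ)) < ε < 1, and set r := (2(λ−δ)ε − λ)/(λ − 2δε), so that 0 < r < 1. Let s < τ < t be real numbers with (t−s)ε < τ − s < t − s. Set c₊ := ε^{-d/2} (λ/(2δ))^{d/2} r^{-d/2}. Then for all x, y, z ∈ ℝ^d: k_λ(t−τ, x−z) · k_{2δ}(τ−s, y−z)² ≤ c₊² · k_{λ/r}(t−τ, x−z) · k_λ(t−s, x−y)². -/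
open MeasureTheory ENNReal

noncomputable section

lemma sq_add_div (p q A B : ℝ) (hA : 0 < A) (hB : 0 < B) :
    (p + q) ^ 2 / (A + B) ≤ p ^ 2 / A + q ^ 2 / B := by
  rw [div_add_div _ _ (ne_of_gt hA) (ne_of_gt hB), div_le_div_iff₀ (by positivity) (by positivity)]
  nlinarith [sq_nonneg (p * B - q * A)]

lemma rpow_neg_half (c e : ℝ) (hc : 0 < c) :
    c ^ (-e / 2) = (c⁻¹) ^ (e / 2) := by
  rw [neg_div, Real.rpow_neg hc.le, ← Real.inv_rpow hc.le]

lemma combine2 (f C P1 P2 s1 s2 : ℝ) (hC : 0 ≤ C) (h1 : 0 ≤ P1) (h2 : 0 ≤ P2) :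
    (C ^ f) ^ 2 * (P1 ^ f * Real.exp s1) * (P2 ^ f * Real.exp s2) ^ 2
      = (C ^ 2 * P1 * P2 ^ 2) ^ f * Real.exp (s1 + 2 * s2) := by
  have e1 : (C ^ f) ^ 2 = (C ^ 2) ^ f := by
    rw [sq, sq, ← Real.mul_rpow hC hC]
  have e2 : (P2 ^ f) ^ 2 = (P2 ^ 2) ^ f := by
    rw [sq, sq, ← Real.mul_rpow h2 h2]
  have e3 : Real.exp s2 ^ 2 = Real.exp (2 * s2) := by
    rw [sq, ← Real.exp_add]; ring_nf
  rw [mul_pow, e1, e2, e3, Real.mul_rpow (mul_nonneg (by positivity) h1) (by positivity),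
    Real.mul_rpow (by positivity) h1, Real.exp_add]
  ring

lemma combine1 (f P1 P2 s1 s2 : ℝ) (h1 : 0 ≤ P1) (h2 : 0 ≤ P2) :
    (P1 ^ f * Real.exp s1) * (P2 ^ f * Real.exp s2) ^ 2
      = (P1 * P2 ^ 2) ^ f * Real.exp (s1 + 2 * s2) := by
  have := combine2 f 1 P1 P2 s1 s2 zero_le_one h1 h2
  simpa using this


set_option maxHeartbeats 1000000 in
/-- (`a₄⁺`) For `0 < 2δ < λ`, `λ/(2(λ−δ)) < ε < 1`,
`r = (2(λ−δ)ε − λ)/(λ − 2δε)` (so `0 < r < 1`), `s < τ < t` with `(t−s)ε < τ − s`, and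
`c₊ = ε^{-d/2}(λ/(2δ))^{d/2} r^{-d/2}`:
`k_λ(t−τ,x−z) k_{2δ}(τ−s,y−z)² ≤ c₊² k_{λ/r}(t−τ,x−z) k_λ(t−s,x−y)²`. -/
theorem gauss_a4_plus (d : ℕ) (hd : 1 ≤ d) (δ lam ε s τ t r : ℝ)
    (hδ : 0 < 2 * δ) (hdl : 2 * δ < lam)
    (hε0 : lam / (2 * (lam - δ)) < ε) (hε1 : ε < 1)
    (hr : r = (2 * (lam - δ) * ε - lam) / (lam - 2 * δ * ε))
    (hsτ : s < τ) (hτt : τ < t) (hτs : (t - s) * ε < τ - s) (x y z : E d) :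
    (0 < r ∧ r < 1) ∧
    gaussK d lam (t - τ) (x - z) * gaussK d (2 * δ) (τ - s) (y - z) ^ 2
      ≤ (ε ^ (-(d : ℝ) / 2) * (lam / (2 * δ)) ^ ((d : ℝ) / 2) * r ^ (-(d : ℝ) / 2)) ^ 2
        * gaussK d (lam / r) (t - τ) (x - z)
        * gaussK d lam (t - s) (x - y) ^ 2 := by
  have hδ0 : 0 < δ := by linarith
  have hlam : 0 < lam := by linarith
  have hld : 0 < lam - δ := by linarith
  have hε0' : 0 < ε := lt_trans (by positivity) hε0
  have hden : 0 < lam - 2 * δ * ε := by nlinarith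
  have hnum : 0 < 2 * (lam - δ) * ε - lam := by
    have h := (div_lt_iff₀ (by positivity : (0:ℝ) < 2 * (lam - δ))).mp hε0
    nlinarith
  have hr0 : 0 < r := hr ▸ div_pos hnum hden
  have hr1 : r < 1 := by rw [hr, div_lt_one hden]; nlinarith
  have h1r : 0 < 1 - r := by linarith
  refine ⟨⟨hr0, hr1⟩, ?_⟩
  have ha : 0 < t - τ := by linarith
  have hb : 0 < τ - s := by linarith
  have hT : 0 < t - s := by linarith
  -- algebraic facts about r
  have hre : r * (lam - 2 * δ * ε) = 2 * (lam - δ) * ε - lam := by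
    rw [hr]; field_simp
  have h1mr : (1 - r) * (lam - 2 * δ * ε) = 2 * lam * (1 - ε) := by
    linear_combination -hre
  -- the key denominator bound : A + B ≤ 2 λ (t-s)
  have hident : ((2 * lam * (t - s) - 4 * δ * (τ - s)) * (1 - r) - 4 * lam * (t - τ))
      * (lam - 2 * δ * ε) = 4 * lam * (lam - 2 * δ) * ((τ - s) - (t - s) * ε) := by
    linear_combination (2 * lam * (t - s) - 4 * δ * (τ - s)) * h1mr
  have hstep0 : 0 ≤ ((2 * lam * (t - s) - 4 * δ * (τ - s)) * (1 - r) - 4 * lam * (t - τ))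
      * (lam - 2 * δ * ε) := by
    rw [hident]
    apply mul_nonneg (mul_nonneg (by linarith) (by linarith)) (by linarith)
  have hstep : 4 * lam * (t - τ) ≤ (2 * lam * (t - s) - 4 * δ * (τ - s)) * (1 - r) := by
    nlinarith [hstep0, hden]
  have hABle : 4 * lam * (t - τ) / (1 - r) + 4 * δ * (τ - s) ≤ 2 * lam * (t - s) := by
    have h2 := (div_le_iff₀ h1r).mpr hstep
    linarith
  -- exponent inequality
  have hA : 0 < 4 * lam * (t - τ) / (1 - r) := by positivity
  have hB : 0 < 4 * δ * (τ - s) := by positivity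
  have hw : ‖x - y‖ ≤ ‖x - z‖ + ‖y - z‖ := by
    have h := norm_sub_le (x - z) (y - z)
    rwa [sub_sub_sub_cancel_right] at h
  have c1 : ‖x - y‖ ^ 2 / (2 * lam * (t - s)) ≤ (‖x - z‖ + ‖y - z‖) ^ 2 / (2 * lam * (t - s)) := by
    gcongr
  have c2 : (‖x - z‖ + ‖y - z‖) ^ 2 / (2 * lam * (t - s))
      ≤ (‖x - z‖ + ‖y - z‖) ^ 2 / (4 * lam * (t - τ) / (1 - r) + 4 * δ * (τ - s)) := by
    apply div_le_div_of_nonneg_left (by positivity) (by positivity) hABle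
  have c3 := sq_add_div (‖x - z‖) (‖y - z‖) _ _ hA hB
  have hexp : ‖x - y‖ ^ 2 / (2 * lam * (t - s))
      ≤ ‖x - z‖ ^ 2 / (4 * lam * (t - τ) / (1 - r)) + ‖y - z‖ ^ 2 / (4 * δ * (τ - s)) :=
    le_trans (le_trans c1 c2) c3
  have eqA : ‖x - z‖ ^ 2 / (4 * lam * (t - τ) / (1 - r))
      = ‖x - z‖ ^ 2 / (4 * lam * (t - τ)) - r * ‖x - z‖ ^ 2 / (4 * lam * (t - τ)) := by
    rw [div_div_eq_mul_div]; ring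
  have eqr : ‖x - z‖ ^ 2 / (4 * (lam / r) * (t - τ))
      = r * ‖x - z‖ ^ 2 / (4 * lam * (t - τ)) := by
    rw [div_eq_div_iff (by positivity) (by positivity)]
    field_simp
  have eqv : 2 * (‖y - z‖ ^ 2 / (4 * (2 * δ) * (τ - s))) = ‖y - z‖ ^ 2 / (4 * δ * (τ - s)) := by
    rw [_root_.eq_div_iff (by positivity : (0:ℝ) < _).ne']
    field_simp
  have eqw : 2 * (‖x - y‖ ^ 2 / (4 * lam * (t - s))) = ‖x - y‖ ^ 2 / (2 * lam * (t - s)) := by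
    rw [_root_.eq_div_iff (by positivity : (0:ℝ) < _).ne']
    field_simp
    ring
  have hSsum : -‖x - z‖ ^ 2 / (4 * lam * (t - τ)) + 2 * (-‖y - z‖ ^ 2 / (4 * (2 * δ) * (τ - s)))
      ≤ -‖x - z‖ ^ 2 / (4 * (lam / r) * (t - τ)) + 2 * (-‖x - y‖ ^ 2 / (4 * lam * (t - s))) := by
    have e1 : -‖x - z‖ ^ 2 / (4 * lam * (t - τ)) = -(‖x - z‖ ^ 2 / (4 * lam * (t - τ))) := by ring
    have e2 : -‖y - z‖ ^ 2 / (4 * (2 * δ) * (τ - s))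
        = -(‖y - z‖ ^ 2 / (4 * (2 * δ) * (τ - s))) := by ring
    have e3 : -‖x - z‖ ^ 2 / (4 * (lam / r) * (t - τ))
        = -(‖x - z‖ ^ 2 / (4 * (lam / r) * (t - τ))) := by ring
    have e4 : -‖x - y‖ ^ 2 / (4 * lam * (t - s)) = -(‖x - y‖ ^ 2 / (4 * lam * (t - s))) := by ring
    rw [e1, e2, e3, e4, eqr]
    linarith [hexp, eqA, eqv, eqw]
  -- prefactor inequality
  have hπ : (0:ℝ) < Real.pi := Real.pi_pos
  have hKnum : ε ^ 2 * (t - s) ^ 2 * r ≤ (τ - s) ^ 2 := by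
    have h6 : 0 < (t - s) * ε := mul_pos hT hε0'
    have h7 : ((t - s) * ε) ^ 2 ≤ (τ - s) ^ 2 := by nlinarith
    nlinarith [mul_nonneg (sq_nonneg ((t - s) * ε)) (by linarith : (0:ℝ) ≤ 1 - r)]
  have hK : 1 ≤ (τ - s) ^ 2 / (ε ^ 2 * (t - s) ^ 2 * r) := by
    rw [le_div_iff₀ (by positivity)]
    linarith
  have hfac : (ε⁻¹ * (lam / (2 * δ)) * r⁻¹) ^ 2 * (4 * Real.pi * (lam / r) * (t - τ))⁻¹
        * ((4 * Real.pi * lam * (t - s))⁻¹) ^ 2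
      = ((4 * Real.pi * lam * (t - τ))⁻¹ * ((4 * Real.pi * (2 * δ) * (τ - s))⁻¹) ^ 2)
        * ((τ - s) ^ 2 / (ε ^ 2 * (t - s) ^ 2 * r)) := by
    field_simp
  have hBase : (4 * Real.pi * lam * (t - τ))⁻¹ * ((4 * Real.pi * (2 * δ) * (τ - s))⁻¹) ^ 2
      ≤ (ε⁻¹ * (lam / (2 * δ)) * r⁻¹) ^ 2 * (4 * Real.pi * (lam / r) * (t - τ))⁻¹
        * ((4 * Real.pi * lam * (t - s))⁻¹) ^ 2 := by
    rw [hfac]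
    have h8 := mul_le_mul_of_nonneg_left hK
      (show (0:ℝ) ≤ (4 * Real.pi * lam * (t - τ))⁻¹ * ((4 * Real.pi * (2 * δ) * (τ - s))⁻¹) ^ 2
        by positivity)
    simpa using h8
  have hP : ((4 * Real.pi * lam * (t - τ))⁻¹ * ((4 * Real.pi * (2 * δ) * (τ - s))⁻¹) ^ 2)
        ^ ((d : ℝ) / 2)
      ≤ ((ε⁻¹ * (lam / (2 * δ)) * r⁻¹) ^ 2 * (4 * Real.pi * (lam / r) * (t - τ))⁻¹
        * ((4 * Real.pi * lam * (t - s))⁻¹) ^ 2) ^ ((d : ℝ) / 2) :=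
    Real.rpow_le_rpow (by positivity) hBase (by positivity)
  -- assemble
  have hc : ε ^ (-(d : ℝ) / 2) * (lam / (2 * δ)) ^ ((d : ℝ) / 2) * r ^ (-(d : ℝ) / 2)
      = (ε⁻¹ * (lam / (2 * δ)) * r⁻¹) ^ ((d : ℝ) / 2) := by
    rw [rpow_neg_half ε _ hε0', rpow_neg_half r _ hr0,
      ← Real.mul_rpow (by positivity) (by positivity),
      ← Real.mul_rpow (by positivity) (by positivity)]
  simp only [gaussK]
  rw [rpow_neg_half (4 * Real.pi * lam * (t - τ)) _ (by positivity),
    rpow_neg_half (4 * Real.pi * (2 * δ) * (τ - s)) _ (by positivity),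
    rpow_neg_half (4 * Real.pi * (lam / r) * (t - τ)) _ (by positivity),
    rpow_neg_half (4 * Real.pi * lam * (t - s)) _ (by positivity),
    hc,
    combine1 ((d : ℝ) / 2) _ _ _ _ (by positivity) (by positivity),
    combine2 ((d : ℝ) / 2) _ _ _ _ _ (by positivity) (by positivity) (by positivity)]
  exact mul_le_mul hP (Real.exp_le_exp.mpr hSsum) (Real.exp_pos _).le
    (Real.rpow_nonneg (by positivity) _)
end
end

section
/- Let d ≥ 1 and let b : ℝ^d → ℝ^d be a measurable vector field that is form-bounded with respect to −Δ: there are constants β > 0 and c ≥ 0 such that ∫_{ℝ^d} |b(x)|² f(x)² dx ≤ β ∫_{ℝ^d} |∇f(x)|² dx + c ∫_{ℝ^d} f(x)² dx for every f ∈ W^{1,2}(ℝ^d). Then for every t > 0 and every x ∈ ℝ^d, e^{tΔ}|b|²(x) ≤ βd/(8t) + c. -/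
open MeasureTheory ENNReal

noncomputable section

section Lemmas
open Real Set


lemma int_sq_gauss {b : ℝ} (hb : 0 < b) :
    ∫ x : ℝ, x ^ 2 * Real.exp (-b * x ^ 2) = Real.sqrt (Real.pi / b) / (2 * b) := by
  have h1 : ∫ x : ℝ, x ^ 2 * Real.exp (-b * x ^ 2)
      = 2 * ∫ x in Ioi (0:ℝ), x ^ 2 * Real.exp (-b * x ^ 2) := by
    rw [← integral_comp_abs (f := fun x => x ^ 2 * Real.exp (-b * x ^ 2))]
    congr 1; ext x; rw [sq_abs]
  have h2 : ∫ x in Ioi (0:ℝ), x ^ 2 * Real.exp (-b * x ^ 2)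
      = ∫ y in Ioi (0:ℝ), (1/2 : ℝ) • (y ^ ((3:ℝ)/2 - 1) * Real.exp (-(b * y))) := by
    rw [← integral_comp_rpow_Ioi_of_pos (p := 2)
      (g := fun y => (1/2 : ℝ) • (y ^ ((3:ℝ)/2 - 1) * Real.exp (-(b * y)))) two_pos]
    refine setIntegral_congr_fun measurableSet_Ioi (fun x hx => ?_)
    have hx0 : (0:ℝ) < x := hx
    have hxr : x ^ (2:ℝ) = x ^ 2 := by rw [Real.rpow_two]
    rw [hxr]
    have : (x ^ 2 : ℝ) ^ ((3:ℝ)/2 - 1) = x := by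
      rw [show ((3:ℝ)/2 - 1) = 1/2 by norm_num, ← rpow_natCast x 2, ← rpow_mul hx0.le]
      norm_num
    rw [smul_eq_mul, smul_eq_mul, this]
    have : (2:ℝ) * x ^ ((2:ℝ) - 1) = 2 * x := by
      rw [show ((2:ℝ) - 1) = 1 by norm_num, Real.rpow_one]
    rw [this, neg_mul]
    ring
  rw [h1, h2, integral_smul, smul_eq_mul,
    integral_rpow_mul_exp_neg_mul_Ioi (by norm_num : (0:ℝ) < 3/2) hb,
    show ((3:ℝ)/2) = 1/2 + 1 by norm_num, Real.Gamma_add_one (by norm_num),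
    Real.Gamma_one_half_eq]
  have hb1 : (0:ℝ) < 1/b := by positivity
  rw [Real.rpow_add hb1, Real.rpow_one, ← Real.sqrt_eq_rpow,
    show Real.pi / b = Real.pi * (1/b) by ring, Real.sqrt_mul Real.pi_pos.le]
  field_simp

lemma integrable_sq_mul_gauss {b : ℝ} (hb : 0 < b) :
    Integrable fun x : ℝ => x ^ 2 * Real.exp (-b * x ^ 2) := by
  have := integrable_rpow_mul_exp_neg_mul_sq hb (s := 2) (by norm_num)
  simpa [Real.rpow_two] using this

lemma euclid_symm_norm_sq {d : ℕ} (x : Fin d → ℝ) :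
    ‖(MeasurableEquiv.toLp 2 (Fin d → ℝ)) x‖ ^ 2 = ∑ i, x i ^ 2 := by
  rw [EuclideanSpace.norm_eq, Real.sq_sqrt (by positivity)]
  simp [Real.norm_eq_abs, sq_abs]

lemma integral_comp_euclid {d : ℕ} (F : EuclideanSpace ℝ (Fin d) → ℝ) :
    ∫ v, F v = ∫ x : Fin d → ℝ, F ((MeasurableEquiv.toLp 2 (Fin d → ℝ)) x) :=
  ((EuclideanSpace.volume_preserving_symm_measurableEquiv_toLp (Fin d)).symm (MeasurableEquiv.toLp 2 (Fin d → ℝ)).symm |>.integral_comp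
    (MeasurableEquiv.measurableEmbedding _) F).symm

lemma integrable_comp_euclid {d : ℕ} (F : EuclideanSpace ℝ (Fin d) → ℝ)
    (h : Integrable fun x : Fin d → ℝ => F ((MeasurableEquiv.toLp 2 (Fin d → ℝ)) x)) :
    Integrable F := by
  have := ((EuclideanSpace.volume_preserving_symm_measurableEquiv_toLp (Fin d)).symm
    (MeasurableEquiv.toLp 2 (Fin d → ℝ)).symm |>.integrable_comp_emb
    (MeasurableEquiv.measurableEmbedding _) (g := F)).mp (by simpa [Function.comp_def] using h)
  exact this

lemma int_gauss_E {d : ℕ} {b : ℝ} (hb : 0 < b) :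
    ∫ v : EuclideanSpace ℝ (Fin d), Real.exp (-b * ‖v‖ ^ 2)
      = Real.sqrt (Real.pi / b) ^ d := by
  rw [GaussianFourier.integral_rexp_neg_mul_sq_norm hb, finrank_euclideanSpace_fin,
    ← Real.rpow_natCast (Real.sqrt (Real.pi / b)) d, Real.sqrt_eq_rpow,
    ← Real.rpow_mul (by positivity)]
  ring_nf

lemma prod_ite_eq_gen {d : ℕ} (i : Fin d) (A B : Fin d → ℝ) :
    ∏ j, (if j = i then A j else B j) = A i * ∏ j ∈ Finset.univ.erase i, B j := by
  rw [← Finset.mul_prod_erase Finset.univ _ (Finset.mem_univ i)]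
  simp only [if_pos rfl]
  congr 1
  refine Finset.prod_congr rfl fun j hj => ?_
  rw [if_neg (Finset.mem_erase.mp hj).1]

lemma int_sq_gauss_E {d : ℕ} {b : ℝ} (hb : 0 < b) :
    ∫ v : EuclideanSpace ℝ (Fin d), ‖v‖ ^ 2 * Real.exp (-b * ‖v‖ ^ 2)
      = ((d : ℝ) / (2 * b)) * Real.sqrt (Real.pi / b) ^ d := by
  rw [integral_comp_euclid]
  have hpoint : ∀ x : Fin d → ℝ,
      ‖(MeasurableEquiv.toLp 2 (Fin d → ℝ)) x‖ ^ 2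
        * Real.exp (-b * ‖(MeasurableEquiv.toLp 2 (Fin d → ℝ)) x‖ ^ 2)
      = ∑ i, ∏ j, (if j = i then (x j) ^ 2 * Real.exp (-b * (x j) ^ 2)
          else Real.exp (-b * (x j) ^ 2)) := by
    intro x
    rw [euclid_symm_norm_sq]
    have hexp : Real.exp (-b * ∑ j, x j ^ 2) = ∏ j, Real.exp (-b * x j ^ 2) := by
      rw [← Real.exp_sum]; congr 1; rw [Finset.mul_sum]
    rw [hexp, Finset.sum_mul]
    refine Finset.sum_congr rfl fun i _ => ?_
    rw [prod_ite_eq_gen i (fun j => (x j) ^ 2 * Real.exp (-b * (x j) ^ 2))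
      (fun j => Real.exp (-b * (x j) ^ 2)),
      ← Finset.mul_prod_erase Finset.univ (fun j => Real.exp (-b * (x j) ^ 2))
        (Finset.mem_univ i)]
    ring
  simp_rw [hpoint]
  have hint : ∀ i : Fin d, Integrable (fun x : Fin d → ℝ =>
      ∏ j, (if j = i then (x j) ^ 2 * Real.exp (-b * (x j) ^ 2)
        else Real.exp (-b * (x j) ^ 2))) := by
    intro i
    refine Integrable.fintype_prod (f := fun j (y : ℝ) =>
      if j = i then y ^ 2 * Real.exp (-b * y ^ 2) else Real.exp (-b * y ^ 2)) fun j => ?_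
    by_cases h : j = i
    · simp only [if_pos h]; exact integrable_sq_mul_gauss hb
    · simp only [if_neg h]; exact integrable_exp_neg_mul_sq hb
  rw [integral_finset_sum _ fun i _ => hint i]
  have hterm : ∀ i : Fin d, (∫ x : Fin d → ℝ, ∏ j,
      (if j = i then (x j) ^ 2 * Real.exp (-b * (x j) ^ 2)
        else Real.exp (-b * (x j) ^ 2)))
      = (Real.sqrt (Real.pi / b) / (2 * b)) * Real.sqrt (Real.pi / b) ^ (d - 1) := by
    intro i
    rw [MeasureTheory.volume_pi, integral_fintype_prod_eq_prod (μ := fun _ => volume) (fun j (y : ℝ) =>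
      if j = i then y ^ 2 * Real.exp (-b * y ^ 2) else Real.exp (-b * y ^ 2))]
    have : ∀ j : Fin d, (∫ y : ℝ, if j = i then y ^ 2 * Real.exp (-b * y ^ 2)
        else Real.exp (-b * y ^ 2))
        = if j = i then Real.sqrt (Real.pi / b) / (2 * b) else Real.sqrt (Real.pi / b) := by
      intro j
      by_cases h : j = i
      · simp only [if_pos h]; exact int_sq_gauss hb
      · simp only [if_neg h]; exact integral_gaussian b
    rw [Finset.prod_congr rfl fun j _ => this j,
      prod_ite_eq_gen i (fun _ => Real.sqrt (Real.pi / b) / (2 * b))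
        (fun _ => Real.sqrt (Real.pi / b)),
      Finset.prod_const, Finset.card_erase_of_mem (Finset.mem_univ i),
      Finset.card_univ, Fintype.card_fin]
  rw [Finset.sum_congr rfl fun i _ => hterm i, Finset.sum_const, Finset.card_univ,
    Fintype.card_fin, nsmul_eq_mul]
  cases d with
  | zero => simp
  | succ k =>
    simp only [Nat.add_sub_cancel, pow_succ]
    push_cast
    ring

lemma integrable_gauss_E {d : ℕ} {b : ℝ} (hb : 0 < b) :
    Integrable fun v : EuclideanSpace ℝ (Fin d) => Real.exp (-b * ‖v‖ ^ 2) := by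
  refine integrable_comp_euclid _ ?_
  have : (fun x : Fin d → ℝ =>
      Real.exp (-b * ‖(MeasurableEquiv.toLp 2 (Fin d → ℝ)) x‖ ^ 2))
      = fun x => ∏ j, Real.exp (-b * (x j) ^ 2) := by
    funext x
    rw [euclid_symm_norm_sq, ← Real.exp_sum]
    congr 1; rw [Finset.mul_sum]
  rw [this]
  exact Integrable.fintype_prod fun j => integrable_exp_neg_mul_sq hb

lemma gauss_sum_repr {d : ℕ} (b : ℝ) (x : Fin d → ℝ) :
    ‖(MeasurableEquiv.toLp 2 (Fin d → ℝ)) x‖ ^ 2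
        * Real.exp (-b * ‖(MeasurableEquiv.toLp 2 (Fin d → ℝ)) x‖ ^ 2)
      = ∑ i, ∏ j, (if j = i then (x j) ^ 2 * Real.exp (-b * (x j) ^ 2)
          else Real.exp (-b * (x j) ^ 2)) := by
  rw [euclid_symm_norm_sq]
  have hexp : Real.exp (-b * ∑ j, x j ^ 2) = ∏ j, Real.exp (-b * x j ^ 2) := by
    rw [← Real.exp_sum]; congr 1; rw [Finset.mul_sum]
  rw [hexp, Finset.sum_mul]
  refine Finset.sum_congr rfl fun i _ => ?_
  rw [prod_ite_eq_gen i (fun j => (x j) ^ 2 * Real.exp (-b * (x j) ^ 2))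
    (fun j => Real.exp (-b * (x j) ^ 2)),
    ← Finset.mul_prod_erase Finset.univ (fun j => Real.exp (-b * (x j) ^ 2))
      (Finset.mem_univ i)]
  ring

lemma integrable_ite_gauss {d : ℕ} {b : ℝ} (hb : 0 < b) (i : Fin d) :
    Integrable (fun x : Fin d → ℝ =>
      ∏ j, (if j = i then (x j) ^ 2 * Real.exp (-b * (x j) ^ 2)
        else Real.exp (-b * (x j) ^ 2))) := by
  refine Integrable.fintype_prod (f := fun j (y : ℝ) =>
    if j = i then y ^ 2 * Real.exp (-b * y ^ 2) else Real.exp (-b * y ^ 2)) fun j => ?_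
  by_cases h : j = i
  · simp only [if_pos h]; exact integrable_sq_mul_gauss hb
  · simp only [if_neg h]; exact integrable_exp_neg_mul_sq hb

lemma integrable_sq_gauss_E {d : ℕ} {b : ℝ} (hb : 0 < b) :
    Integrable fun v : EuclideanSpace ℝ (Fin d) => ‖v‖ ^ 2 * Real.exp (-b * ‖v‖ ^ 2) := by
  refine integrable_comp_euclid _ ?_
  have : (fun x : Fin d → ℝ =>
      ‖(MeasurableEquiv.toLp 2 (Fin d → ℝ)) x‖ ^ 2
        * Real.exp (-b * ‖(MeasurableEquiv.toLp 2 (Fin d → ℝ)) x‖ ^ 2))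
      = fun x => ∑ i, ∏ j, (if j = i then (x j) ^ 2 * Real.exp (-b * (x j) ^ 2)
          else Real.exp (-b * (x j) ^ 2)) := funext fun x => gauss_sum_repr b x
  rw [this]
  exact integrable_finset_sum _ fun i _ => integrable_ite_gauss hb i

end Lemmas

open Real in
/-- If `b` is form-bounded with respect to `−Δ`, i.e.
`∫ |b|² f² ≤ β ∫ |∇f|² + c ∫ f²` for every `f ∈ W^{1,2}`, then
`e^{tΔ}|b|²(x) ≤ βd/(8t) + c` for every `t > 0` and `x`. -/
theorem heat_of_form_bounded (d : ℕ) (hd : 1 ≤ d) (b : E d → E d) (hb : Measurable b)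
    (β c : ℝ) (hβ : 0 < β) (hc : 0 ≤ c)
    (hform : ∀ f : E d → ℝ, ContDiff ℝ 1 f → MemLp f 2 volume →
      MemLp (fun x => gradient f x) 2 volume →
      (∫⁻ x, ENNReal.ofReal (‖b x‖ ^ 2 * f x ^ 2))
        ≤ ENNReal.ofReal (β * (∫ x, ‖gradient f x‖ ^ 2) + c * ∫ x, f x ^ 2)) :
    ∀ t > (0 : ℝ), ∀ x : E d,
      heatSem d t (bsq d b) x ≤ ENNReal.ofReal (β * d / (8 * t) + c) := by
  intro t ht x
  have h4t : (0:ℝ) < 4 * Real.pi * t := by positivity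
  set a : ℝ := 1 / (8 * t) with ha_def
  have ha : 0 < a := by positivity
  have h2a : 0 < 2 * a := by positivity
  set N : ℝ := (4 * Real.pi * t) ^ (-(d : ℝ) / 4) with hN_def
  have hN : 0 < N := Real.rpow_pos_of_pos h4t _
  set f : E d → ℝ := fun y => N * Real.exp (-a * ‖y - x‖ ^ 2) with hf_def
  have hfpos : ∀ y, 0 < f y := fun y => mul_pos hN (Real.exp_pos _)
  have hNsq : N ^ 2 = (4 * Real.pi * t) ^ (-(d : ℝ) / 2) := by
    rw [hN_def, ← Real.rpow_natCast ((4*Real.pi*t) ^ (-(d:ℝ)/4)) 2,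
      ← Real.rpow_mul h4t.le]
    congr 1
    push_cast
    ring
  have hfsq : ∀ y, f y ^ 2 = N ^ 2 * Real.exp (-(2 * a) * ‖y - x‖ ^ 2) := by
    intro y
    rw [hf_def, mul_pow, sq (Real.exp _), ← Real.exp_add]
    congr 1
    ring
  -- the key normalization fact
  have hπ2a : Real.pi / (2 * a) = 4 * Real.pi * t := by
    rw [ha_def]; field_simp; ring
  have hone : N ^ 2 * Real.sqrt (Real.pi / (2 * a)) ^ d = 1 := by
    rw [hπ2a, hNsq, ← Real.rpow_natCast (Real.sqrt (4*Real.pi*t)) d,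
      Real.sqrt_eq_rpow, ← Real.rpow_mul h4t.le, ← Real.rpow_add h4t]
    rw [show -(d:ℝ)/2 + 1/2 * d = 0 by ring, Real.rpow_zero]
  -- identification with the Gaussian kernel
  have hgauss : ∀ y, gaussK d 1 t (x - y) = f y ^ 2 := by
    intro y
    rw [hfsq, hNsq, gaussK, norm_sub_rev x y]
    congr 2
    · ring
    · rw [ha_def]; field_simp; ring
  have hLHS : heatSem d t (bsq d b) x = ∫⁻ y, ENNReal.ofReal (‖b y‖ ^ 2 * f y ^ 2) := by
    rw [heatSem]
    congr 1
    funext y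
    rw [bsq, hgauss y, ← ENNReal.ofReal_mul (by positivity), mul_comm]
  -- smoothness
  have hq : ContDiff ℝ 1 fun y : E d => ‖y - x‖ ^ 2 :=
    ContDiff.norm_sq ℝ (contDiff_id.sub contDiff_const)
  have hcont : ContDiff ℝ 1 f :=
    contDiff_const.mul ((contDiff_const.mul hq).exp)
  -- gradient
  have hgrad : ∀ y, HasGradientAt f ((-(2*a) * f y) • (y - x)) y := by
    intro y
    have h1 : HasFDerivAt (fun z : E d => ‖z - x‖ ^ 2)
        (2 • (innerSL ℝ (y - x))) y := by
      have := ((hasFDerivAt_id y).sub_const x).norm_sq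
      simpa using this
    have h4 := ((h1.const_mul (-a)).exp).const_mul N
    rw [hasGradientAt_iff_hasFDerivAt]
    convert h4 using 1
    rotate_left
    ext w
    simp [hf_def, InnerProductSpace.toDual_apply_apply, real_inner_smul_left, innerSL_apply_apply]
    ring
    rfl
  have hgradient : gradient f = fun y => (-(2*a) * f y) • (y - x) :=
    gradient_eq hgrad
  -- the squared norm of the gradient
  have hgn : ∀ y, ‖(-(2*a) * f y) • (y - x)‖ ^ 2
      = (4 * a ^ 2 * N ^ 2) * (‖y - x‖ ^ 2 * Real.exp (-(2*a) * ‖y - x‖ ^ 2)) := by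
    intro y
    rw [norm_smul, mul_pow, Real.norm_eq_abs, sq_abs, mul_pow, hfsq y]
    ring
  -- MemLp hypotheses
  have hf2int : Integrable (fun y => f y ^ 2) := by
    simp_rw [hfsq]
    exact ((integrable_gauss_E h2a).comp_sub_right x).const_mul _
  have hmem : MemLp f 2 volume :=
    (memLp_two_iff_integrable_sq hcont.continuous.aestronglyMeasurable).mpr hf2int
  have hgcont : Continuous fun y => (-(2*a) * f y) • (y - x) :=
    (continuous_const.mul hcont.continuous).smul (continuous_id.sub continuous_const)
  have hgmem : MemLp (fun y => gradient f y) 2 volume := by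
    have heq : (fun y => gradient f y) = fun y => (-(2*a) * f y) • (y - x) := by
      funext y; rw [hgradient]
    rw [heq]
    refine (memLp_two_iff_integrable_sq_norm hgcont.aestronglyMeasurable).mpr ?_
    simp_rw [hgn]
    exact ((integrable_sq_gauss_E h2a).comp_sub_right x).const_mul _
  -- the integrals
  have hI0 : ∫ y, f y ^ 2 = 1 := by
    simp_rw [hfsq]
    rw [integral_const_mul,
      integral_sub_right_eq_self (fun v : E d => Real.exp (-(2*a) * ‖v‖ ^ 2)) x,
      int_gauss_E h2a, hone]
  have hI1 : ∫ y, ‖gradient f y‖ ^ 2 = (d : ℝ) / (8 * t) := by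
    have heq : (fun y => ‖gradient f y‖ ^ 2)
        = fun y => (4 * a ^ 2 * N ^ 2) * (‖y - x‖ ^ 2 * Real.exp (-(2*a) * ‖y - x‖ ^ 2)) := by
      funext y; rw [hgradient]; exact hgn y
    rw [heq, integral_const_mul,
      integral_sub_right_eq_self
        (fun v : E d => ‖v‖ ^ 2 * Real.exp (-(2*a) * ‖v‖ ^ 2)) x,
      int_sq_gauss_E h2a]
    have : 4 * a ^ 2 * N ^ 2 * ((d : ℝ) / (2 * (2 * a)) * Real.sqrt (Real.pi / (2 * a)) ^ d)
        = (a * d) * (N ^ 2 * Real.sqrt (Real.pi / (2 * a)) ^ d) := by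
      field_simp
      ring
    rw [this, hone, mul_one, ha_def]
    ring
  have key := hform f hcont hmem hgmem
  rw [hI0, hI1] at key
  rw [hLHS]
  refine key.trans (le_of_eq ?_)
  congr 1
  ring
end
end

section
/- Let d ≥ 1 and let b : ℝ^d → ℝ^d be a measurable vector field with |b| ∈ L²_loc such that: (i) there are constants β > 0 and c ≥ 0 with ∫_{ℝ^d} |b|² f² dx ≤ β ∫_{ℝ^d} |∇f|² dx + c ∫_{ℝ^d} f² dx for every f ∈ W^{1,2}(ℝ^d), and (ii) n_e(b,h) < ∞ for some h > 0. Then κ_d(b,h) ≤ sqrt(βd/8 + c·h) · n_e(b,h) < ∞; in particular b belongs to the Kato class K^d. -/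
open MeasureTheory ENNReal

noncomputable section

/-- The Kato norm of order `d`, `κ_d(b,h)`. -/
def katoNormD (d : ℕ) (b : E d → E d) (h : ℝ) : ℝ≥0∞ :=
  ⨆ x : E d, ∫⁻ t in Set.Ioc (0 : ℝ) h, heatSem d t (bsq d b) x

namespace NashKatoAux

open Real Set Filter

lemma integrable_sq_mul_exp {s : ℝ} (hs : 0 < s) :
    Integrable fun x : ℝ => x ^ 2 * Real.exp (-s * x ^ 2) := by
  have h2 : ∀ x : ℝ, x ^ (2 : ℝ) = x ^ (2 : ℕ) := fun x => by
    rw [show (2:ℝ) = ((2:ℕ):ℝ) by norm_num, Real.rpow_natCast]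
  have := integrable_rpow_mul_exp_neg_mul_sq hs (s := 2) (by norm_num)
  simpa [h2] using this

lemma integral_sq_mul_exp {s : ℝ} (hs : 0 < s) :
    ∫ x : ℝ, x ^ 2 * Real.exp (-s * x ^ 2) = (1 / (2 * s)) * Real.sqrt (π / s) := by
  have habs : (fun x : ℝ => x ^ 2 * Real.exp (-s * x ^ 2))
      = fun x : ℝ => |x| ^ 2 * Real.exp (-s * |x| ^ 2) := by
    funext x; rw [sq_abs]
  rw [habs, integral_comp_abs (f := fun u : ℝ => u ^ 2 * Real.exp (-s * u ^ 2))]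
  have hderiv : ∀ y : ℝ, HasDerivAt (fun x : ℝ => -(1/(2*s)) * (x * Real.exp (-s * x ^ 2)))
      (y ^ 2 * Real.exp (-s * y ^ 2) - (1/(2*s)) * Real.exp (-s * y ^ 2)) y := by
    intro y
    have h1 : HasDerivAt (fun x : ℝ => -s * x ^ 2) (-s * (2 * y)) y := by
      simpa using (hasDerivAt_pow 2 y).const_mul (-s)
    have h2 := h1.exp
    have h3 := (hasDerivAt_id y).mul h2
    have h4 := h3.const_mul (-(1/(2*s)))
    refine h4.congr_deriv ?_
    simp only [id_eq]
    field_simp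
    ring
  have htend : Tendsto (fun x : ℝ => -(1/(2*s)) * (x * Real.exp (-s * x ^ 2))) atTop (nhds 0) := by
    have h0 : Tendsto (fun x : ℝ => Real.exp (-(1/2) * x)) atTop (nhds 0) := by
      have : Tendsto (fun x : ℝ => -(1/2) * x) atTop atBot :=
        (tendsto_id (α := ℝ)).const_mul_atTop_of_neg (by norm_num)
      exact Real.tendsto_exp_atBot.comp this
    have hlo := (rpow_mul_exp_neg_mul_sq_isLittleO_exp_neg hs 1).tendsto_zero_of_tendsto h0
    have : Tendsto (fun x : ℝ => x * Real.exp (-s * x ^ 2)) atTop (nhds 0) := by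
      refine hlo.congr' ?_
      filter_upwards [eventually_gt_atTop (0:ℝ)] with x hx
      rw [Real.rpow_one]
    simpa using this.const_mul (-(1/(2*s)))
  have hint : IntegrableOn (fun y : ℝ => y ^ 2 * Real.exp (-s * y ^ 2)
      - (1/(2*s)) * Real.exp (-s * y ^ 2)) (Ioi (0:ℝ)) :=
    ((integrable_sq_mul_exp hs).sub ((integrable_exp_neg_mul_sq hs).const_mul _)).integrableOn
  have key := integral_Ioi_of_hasDerivAt_of_tendsto' (fun y _ => hderiv y) hint htend
  simp only [zero_mul, mul_zero, Real.exp_zero, mul_one, sub_zero] at key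
  have hsub : ∫ y in Ioi (0:ℝ), (y ^ 2 * Real.exp (-s * y ^ 2)
      - (1/(2*s)) * Real.exp (-s * y ^ 2))
      = (∫ y in Ioi (0:ℝ), y ^ 2 * Real.exp (-s * y ^ 2))
        - ∫ y in Ioi (0:ℝ), (1/(2*s)) * Real.exp (-s * y ^ 2) :=
    integral_sub (integrable_sq_mul_exp hs).integrableOn
      ((integrable_exp_neg_mul_sq hs).const_mul _).integrableOn
  rw [hsub] at key
  have h5 : ∫ y in Ioi (0:ℝ), y ^ 2 * Real.exp (-s * y ^ 2)
      = (1/(2*s)) * (Real.sqrt (π / s) / 2) := by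
    have := integral_gaussian_Ioi s
    rw [sub_eq_zero] at key
    rw [key, integral_const_mul, this]
  rw [h5]
  field_simp

lemma integrable_exp_norm (d : ℕ) {s : ℝ} (hs : 0 < s) :
    Integrable fun v : E d => Real.exp (-s * ‖v‖ ^ 2) := by
  have h := (GaussianFourier.integrable_cexp_neg_mul_sq_norm_add (V := E d)
    (b := (s : ℂ)) (by simpa using hs) 0 0).norm
  refine h.congr ?_
  filter_upwards with v
  simp [Complex.norm_exp]
  left
  norm_cast

lemma integral_exp_norm (d : ℕ) {s : ℝ} (hs : 0 < s) :
    ∫ v : E d, Real.exp (-s * ‖v‖ ^ 2) = (π / s) ^ ((d : ℝ) / 2) := by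
  have := GaussianFourier.integral_rexp_neg_mul_sq_norm (V := E d) hs
  rwa [finrank_euclideanSpace_fin] at this

lemma pi_decomp (d : ℕ) (s : ℝ) (w : Fin d → ℝ) :
    (∑ i, w i ^ 2) * Real.exp (-s * ∑ i, w i ^ 2)
      = ∑ i, ∏ j, (if j = i then (w j) ^ 2 * Real.exp (-s * (w j) ^ 2)
          else Real.exp (-s * (w j) ^ 2)) := by
  have hexp : Real.exp (-s * ∑ i, w i ^ 2) = ∏ j, Real.exp (-s * (w j) ^ 2) := by
    rw [← Real.exp_sum]
    congr 1
    rw [Finset.mul_sum]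
  rw [hexp, Finset.sum_mul]
  refine Finset.sum_congr rfl fun i _ => ?_
  rw [← Finset.mul_prod_erase Finset.univ _ (Finset.mem_univ i),
    ← Finset.mul_prod_erase Finset.univ
      (fun j => if j = i then w j ^ 2 * Real.exp (-s * w j ^ 2) else Real.exp (-s * w j ^ 2))
      (Finset.mem_univ i), if_pos rfl,
    Finset.prod_congr rfl (fun j hj => if_neg (Finset.ne_of_mem_erase hj))]
  ring

lemma integrable_moment_pi (d : ℕ) {s : ℝ} (hs : 0 < s) :
    Integrable fun w : Fin d → ℝ => (∑ i, w i ^ 2) * Real.exp (-s * ∑ i, w i ^ 2) := by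
  have : ∀ w : Fin d → ℝ, (∑ i, w i ^ 2) * Real.exp (-s * ∑ i, w i ^ 2)
      = ∑ i, ∏ j, (if j = i then (w j) ^ 2 * Real.exp (-s * (w j) ^ 2)
          else Real.exp (-s * (w j) ^ 2)) := pi_decomp d s
  refine (integrable_finset_sum _ fun i _ => ?_).congr
    (Filter.Eventually.of_forall fun w => (this w).symm)
  refine Integrable.fintype_prod (f := fun j (x : ℝ) => if j = i then x ^ 2 * Real.exp (-s * x ^ 2)
    else Real.exp (-s * x ^ 2)) fun j => ?_
  by_cases hj : j = i
  · simpa [hj] using integrable_sq_mul_exp hs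
  · simpa [hj] using integrable_exp_neg_mul_sq hs

lemma integral_moment_pi (d : ℕ) (hd : 1 ≤ d) {s : ℝ} (hs : 0 < s) :
    ∫ w : Fin d → ℝ, (∑ i, w i ^ 2) * Real.exp (-s * ∑ i, w i ^ 2)
      = ((d : ℝ) * (1 / (2 * s))) * (π / s) ^ ((d : ℝ) / 2) := by
  rw [show (fun w : Fin d → ℝ => (∑ i, w i ^ 2) * Real.exp (-s * ∑ i, w i ^ 2))
      = fun w : Fin d → ℝ => ∑ i, ∏ j, (if j = i then (w j) ^ 2 * Real.exp (-s * (w j) ^ 2)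
          else Real.exp (-s * (w j) ^ 2)) from funext (pi_decomp d s)]
  rw [integral_finset_sum (μ := volume) _ (fun i _ => Integrable.fintype_prod
    (f := fun j (x : ℝ) => if j = i then x ^ 2 * Real.exp (-s * x ^ 2)
      else Real.exp (-s * x ^ 2)) fun j => by
        by_cases hj : j = i
        · simpa [hj] using integrable_sq_mul_exp hs
        · simpa [hj] using integrable_exp_neg_mul_sq hs)]
  have hterm : ∀ i : Fin d, (∫ w : Fin d → ℝ, ∏ j, (if j = i then (w j) ^ 2 *
      Real.exp (-s * (w j) ^ 2) else Real.exp (-s * (w j) ^ 2)))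
      = (1 / (2 * s)) * Real.sqrt (π / s) * Real.sqrt (π / s) ^ (d - 1) := by
    intro i
    rw [volume_pi, integral_fintype_prod_eq_prod (μ := fun _ => volume) (f := fun j (x : ℝ) => if j = i then
      x ^ 2 * Real.exp (-s * x ^ 2) else Real.exp (-s * x ^ 2))]
    rw [← Finset.mul_prod_erase Finset.univ _ (Finset.mem_univ i)]
    simp only [eq_self_iff_true, if_true]
    rw [integral_sq_mul_exp hs]
    congr 1
    rw [Finset.prod_congr rfl (fun j hj => by
      simp only [if_neg (Finset.ne_of_mem_erase hj)]
      rw [integral_gaussian]), Finset.prod_const,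
      Finset.card_erase_of_mem (Finset.mem_univ i), Finset.card_univ, Fintype.card_fin]
  simp_rw [hterm]
  rw [Finset.sum_const, Finset.card_univ, Fintype.card_fin, nsmul_eq_mul]
  have hX : (0:ℝ) ≤ π / s := div_nonneg Real.pi_pos.le hs.le
  have hsqrt : Real.sqrt (π / s) * Real.sqrt (π / s) ^ (d - 1) = (π / s) ^ ((d:ℝ)/2) := by
    rw [← pow_succ']
    have : d - 1 + 1 = d := Nat.succ_pred_eq_of_pos hd
    rw [this, Real.sqrt_eq_rpow, ← Real.rpow_natCast ((π/s) ^ ((1:ℝ)/2)) d,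
      ← Real.rpow_mul hX]
    ring_nf
  rw [mul_assoc, hsqrt]
  ring

lemma integrable_moment (d : ℕ) {s : ℝ} (hs : 0 < s) :
    Integrable fun v : E d => ‖v‖ ^ 2 * Real.exp (-s * ‖v‖ ^ 2) := by
  have mp := (EuclideanSpace.volume_preserving_symm_measurableEquiv_toLp (Fin d)).symm
  rw [← MeasurePreserving.integrable_comp_emb mp (MeasurableEquiv.measurableEmbedding _)]
  have hn : ∀ w : Fin d → ℝ,
      ‖((MeasurableEquiv.toLp 2 (Fin d → ℝ)).symm.symm w : E d)‖ ^ 2 = ∑ i, w i ^ 2 := by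
    intro w
    rw [EuclideanSpace.norm_eq, Real.sq_sqrt (Finset.sum_nonneg fun i _ => by positivity)]
    refine Finset.sum_congr rfl fun i _ => ?_
    simp [Real.norm_eq_abs, sq_abs]
  have : (fun w : Fin d → ℝ =>
      (‖((MeasurableEquiv.toLp 2 (Fin d → ℝ)).symm.symm w : E d)‖ ^ 2)
        * Real.exp (-s * ‖((MeasurableEquiv.toLp 2 (Fin d → ℝ)).symm.symm w : E d)‖ ^ 2))
      = fun w : Fin d → ℝ => (∑ i, w i ^ 2) * Real.exp (-s * ∑ i, w i ^ 2) := by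
    funext w; rw [hn]
  exact (this ▸ integrable_moment_pi d hs :)

lemma integral_moment (d : ℕ) (hd : 1 ≤ d) {s : ℝ} (hs : 0 < s) :
    ∫ v : E d, ‖v‖ ^ 2 * Real.exp (-s * ‖v‖ ^ 2)
      = ((d : ℝ) * (1 / (2 * s))) * (π / s) ^ ((d : ℝ) / 2) := by
  have mp := (EuclideanSpace.volume_preserving_symm_measurableEquiv_toLp (Fin d)).symm
  rw [← mp.integral_comp (MeasurableEquiv.measurableEmbedding _)]
  have hn : ∀ w : Fin d → ℝ,
      ‖((MeasurableEquiv.toLp 2 (Fin d → ℝ)).symm.symm w : E d)‖ ^ 2 = ∑ i, w i ^ 2 := by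
    intro w
    rw [EuclideanSpace.norm_eq, Real.sq_sqrt (Finset.sum_nonneg fun i _ => by positivity)]
    refine Finset.sum_congr rfl fun i _ => ?_
    simp [Real.norm_eq_abs, sq_abs]
  simp_rw [hn]
  exact integral_moment_pi d hd hs

lemma hasGradientAt_gauss (d : ℕ) (C a : ℝ) (x y : E d) :
    HasGradientAt (fun y : E d => C * Real.exp (-a * ‖x - y‖ ^ 2))
      ((2 * a * (C * Real.exp (-a * ‖x - y‖ ^ 2))) • (x - y)) y := by
  rw [hasGradientAt_iff_hasFDerivAt]
  have h1 : HasFDerivAt (fun y : E d => x - y)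
      (-(ContinuousLinearMap.id ℝ (E d))) y := by
    exact (hasFDerivAt_id (𝕜 := ℝ) y).const_sub x
  have h2 := h1.norm_sq
  have h3 := ((h2.const_mul (-a)).exp).const_mul C
  refine h3.congr_fderiv ?_
  ext z
  simp only [InnerProductSpace.toDual_apply_apply, ContinuousLinearMap.smul_apply,
    ContinuousLinearMap.comp_apply, ContinuousLinearMap.neg_apply,
    ContinuousLinearMap.coe_id', id_eq, innerSL_apply_apply, real_inner_smul_left,
    ContinuousLinearMap.add_apply,
    smul_eq_mul, two_smul, inner_neg_right]
  ring

end NashKatoAux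

open NashKatoAux in
/-- If `b` is form-bounded with respect to `−Δ` and `n_e(b,h) < ∞`
for some `h > 0`, then `κ_d(b,h) ≤ sqrt(βd/8 + ch) · n_e(b,h) < ∞`; in particular `b`
belongs to the Kato class `K^d`. -/
theorem nash_and_formbounded_subset_KatoD (d : ℕ) (hd : 1 ≤ d)
    (b : E d → E d) (hb : Measurable b)
    (hb2 : LocallyIntegrable (fun x : E d => ‖b x‖ ^ 2) volume)
    (β c : ℝ) (hβ : 0 < β) (hc : 0 ≤ c)
    (hform : ∀ f : E d → ℝ, ContDiff ℝ 1 f → MemLp f 2 volume →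
      MemLp (fun x => gradient f x) 2 volume →
      (∫⁻ x, ENNReal.ofReal (‖b x‖ ^ 2 * f x ^ 2))
        ≤ ENNReal.ofReal (β * (∫ x, ‖gradient f x‖ ^ 2) + c * ∫ x, f x ^ 2))
    (h : ℝ) (hh : 0 < h) (hnash : nashNorm d b h ≠ ⊤) :
    katoNormD d b h ≤ ENNReal.ofReal (Real.sqrt (β * d / 8 + c * h)) * nashNorm d b h ∧
      katoNormD d b h < ⊤ := by
  -- Step 1: pointwise heat-kernel bound from the form-boundedness.
  have key : ∀ (x : E d) {t : ℝ}, 0 < t →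
      heatSem d t (bsq d b) x ≤ ENNReal.ofReal (β * ((d:ℝ)/(8*t)) + c) := by
    intro x t ht
    set a : ℝ := (8*t)⁻¹ with ha_def
    have ha : 0 < a := by positivity
    have h2a : 0 < 2*a := by positivity
    have h4πt : 0 < 4*Real.pi*t := by positivity
    set C : ℝ := (4*Real.pi*t) ^ (-(d:ℝ)/4) with hC_def
    set f : E d → ℝ := fun y => C * Real.exp (-a * ‖x - y‖ ^ 2) with hf_def
    have hC2 : C ^ 2 = (4*Real.pi*t) ^ (-(d:ℝ)/2) := by
      rw [hC_def, ← Real.rpow_natCast ((4*Real.pi*t) ^ (-(d:ℝ)/4)) 2,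
        ← Real.rpow_mul h4πt.le]
      congr 1
      ring
    have hsq : ∀ y, f y ^ 2 = C ^ 2 * Real.exp (-(2*a) * ‖x - y‖ ^ 2) := by
      intro y
      rw [hf_def]
      simp only
      rw [mul_pow, pow_two (Real.exp _), ← Real.exp_add]
      congr 1
      ring
    have hXeq : Real.pi / (2*a) = 4*Real.pi*t := by
      rw [ha_def]
      field_simp
      ring
    have hnormz : C ^ 2 * (Real.pi/(2*a)) ^ ((d:ℝ)/2) = 1 := by
      rw [hXeq, hC2, ← Real.rpow_add h4πt,
        show (-(d:ℝ)/2 + (d:ℝ)/2) = 0 by ring, Real.rpow_zero]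
    -- ∫ f² = 1
    have hint_f2 : ∫ y, f y ^ 2 = 1 := by
      calc ∫ y, f y ^ 2 = ∫ y, C ^ 2 * Real.exp (-(2*a) * ‖x - y‖ ^ 2) := by
            exact integral_congr_ae (Filter.Eventually.of_forall hsq)
        _ = C ^ 2 * ∫ y, Real.exp (-(2*a) * ‖x - y‖ ^ 2) := integral_const_mul _ _
        _ = C ^ 2 * ∫ z, Real.exp (-(2*a) * ‖z‖ ^ 2) :=
            congrArg _ (integral_sub_left_eq_self
              (fun z : E d => Real.exp (-(2*a) * ‖z‖ ^ 2)) volume x)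
        _ = C ^ 2 * (Real.pi/(2*a)) ^ ((d:ℝ)/2) := by rw [integral_exp_norm d h2a]
        _ = 1 := hnormz
    -- gradient facts
    have hgrad_eq : ∀ y, gradient f y = (2 * a * f y) • (x - y) := fun y =>
      (hasGradientAt_gauss d C a x y).gradient
    have hgradsq : ∀ y, ‖gradient f y‖ ^ 2
        = (4*a^2*C^2) * (‖x - y‖ ^ 2 * Real.exp (-(2*a) * ‖x - y‖ ^ 2)) := by
      intro y
      rw [hgrad_eq y, norm_smul, mul_pow, Real.norm_eq_abs, sq_abs, mul_pow, hsq y]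
      ring
    have hint_grad : ∫ y, ‖gradient f y‖ ^ 2 = β⁻¹ * (β * ((d:ℝ)/(8*t))) := by
      have e1 : ∫ y, ‖gradient f y‖ ^ 2
          = (4*a^2*C^2) * ∫ y, ‖x - y‖ ^ 2 * Real.exp (-(2*a) * ‖x - y‖ ^ 2) := by
        rw [← integral_const_mul]
        exact integral_congr_ae (Filter.Eventually.of_forall hgradsq)
      rw [e1, integral_sub_left_eq_self
        (fun z : E d => ‖z‖ ^ 2 * Real.exp (-(2*a) * ‖z‖ ^ 2)) volume x,
        integral_moment d hd h2a]
      have : 4*a^2*C^2 * (((d:ℝ) * (1 / (2 * (2*a)))) * (Real.pi/(2*a)) ^ ((d:ℝ)/2))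
          = (C ^ 2 * (Real.pi/(2*a)) ^ ((d:ℝ)/2)) * ((d:ℝ) * a) := by
        field_simp
        ring
      rw [this, hnormz, one_mul, ha_def]
      field_simp
    -- MemLp facts
    have hcont_f : Continuous f := by
      rw [hf_def]
      fun_prop
    have hmem_f : MemLp f 2 volume := by
      rw [memLp_two_iff_integrable_sq hcont_f.aestronglyMeasurable]
      exact (((integrable_exp_norm d h2a).comp_sub_left x).const_mul (C^2)).congr
        (Filter.Eventually.of_forall fun y => (hsq y).symm)
    have hmem_g : MemLp (fun y => gradient f y) 2 volume := by
      have hgc : Continuous fun y : E d => gradient f y := by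
        rw [show (fun y : E d => gradient f y) = fun y : E d => (2 * a * f y) • (x - y)
          from funext hgrad_eq]
        exact ((continuous_const.mul hcont_f).smul (continuous_const.sub continuous_id))
      rw [memLp_two_iff_integrable_sq_norm hgc.aestronglyMeasurable]
      exact (((integrable_moment d h2a).comp_sub_left x).const_mul (4*a^2*C^2)).congr
        (Filter.Eventually.of_forall fun y => (hgradsq y).symm)
    have hcd : ContDiff ℝ 1 f := by
      rw [hf_def]
      exact contDiff_const.mul
        ((contDiff_const.mul ((contDiff_const.sub contDiff_id).norm_sq (𝕜 := ℝ))).exp)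
    have hF := hform f hcd hmem_f hmem_g
    rw [hint_grad, hint_f2] at hF
    have hker : ∀ y : E d, gaussK d 1 t (x - y) = f y ^ 2 := by
      intro y
      rw [hsq y, gaussK, hC2]
      congr 1
      · ring_nf
      · congr 1
        rw [ha_def]
        field_simp
        ring
    have heq : heatSem d t (bsq d b) x = ∫⁻ y, ENNReal.ofReal (‖b y‖ ^ 2 * f y ^ 2) := by
      rw [heatSem]
      refine lintegral_congr fun y => ?_
      rw [ENNReal.ofReal_mul (by positivity), hker y, bsq, mul_comm]
    rw [heq]
    refine hF.trans (le_of_eq ?_)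
    congr 1
    rw [mul_inv_cancel_left₀ hβ.ne']
    ring
  -- Step 2: bound on each x's time-integral.
  set M : ℝ := β * (d:ℝ) / 8 + c * h with hM_def
  have hM : 0 ≤ M := by positivity
  have ptwise : ∀ (x : E d) {t : ℝ}, t ∈ Set.Ioc (0:ℝ) h →
      heatSem d t (bsq d b) x ≤ ENNReal.ofReal (Real.sqrt M) *
        ((heatSem d t (bsq d b) x) ^ (1/2:ℝ) * ENNReal.ofReal (t ^ (-(1:ℝ)/2))) := by
    intro x t ht
    have ht0 : 0 < t := ht.1
    have hA : heatSem d t (bsq d b) x ≤ ENNReal.ofReal (M / t) := by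
      refine (key x ht0).trans (ENNReal.ofReal_le_ofReal ?_)
      rw [le_div_iff₀ ht0]
      have e1 : (β * ((d:ℝ)/(8*t)) + c) * t = β * (d:ℝ) / 8 + c * t := by
        field_simp
      rw [e1, hM_def]
      exact add_le_add_right (mul_le_mul_of_nonneg_left ht.2 hc) _
    set A := heatSem d t (bsq d b) x with hA_def
    calc A = A ^ (1/2:ℝ) * A ^ (1/2:ℝ) := by
          rw [← ENNReal.rpow_add_of_nonneg (1/2) (1/2) (by norm_num) (by norm_num)]
          norm_num
      _ ≤ (ENNReal.ofReal (M/t)) ^ (1/2:ℝ) * A ^ (1/2:ℝ) :=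
          mul_le_mul_left (ENNReal.rpow_le_rpow hA (by norm_num)) _
      _ = ENNReal.ofReal (Real.sqrt M) * (A ^ (1/2:ℝ) * ENNReal.ofReal (t ^ (-(1:ℝ)/2))) := by
          rw [ENNReal.ofReal_rpow_of_nonneg (div_nonneg hM ht0.le) (by norm_num)]
          have h1 : (t⁻¹) ^ ((1:ℝ)/2) = t ^ (-(1:ℝ)/2) := by
            rw [Real.inv_rpow ht0.le, ← Real.rpow_neg ht0.le]
            norm_num
          have h2 : (M/t) ^ ((1:ℝ)/2) = Real.sqrt M * t ^ (-(1:ℝ)/2) := by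
            rw [div_eq_mul_inv, Real.mul_rpow hM (inv_nonneg.2 ht0.le), h1,
              Real.sqrt_eq_rpow]
          rw [show ((1:ℝ)/2) = (1/2:ℝ) from rfl] at h2
          rw [h2, ENNReal.ofReal_mul (Real.sqrt_nonneg M)]
          ring
  have hxbound : ∀ x : E d, ∫⁻ t in Set.Ioc (0:ℝ) h, heatSem d t (bsq d b) x
      ≤ ENNReal.ofReal (Real.sqrt M) * nashNorm d b h := by
    intro x
    have step : ∫⁻ t in Set.Ioc (0:ℝ) h, heatSem d t (bsq d b) x
        ≤ ∫⁻ t in Set.Ioc (0:ℝ) h, ENNReal.ofReal (Real.sqrt M) *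
          ((heatSem d t (bsq d b) x) ^ (1/2:ℝ) * ENNReal.ofReal (t ^ (-(1:ℝ)/2))) := by
      refine lintegral_mono_ae ?_
      filter_upwards [ae_restrict_mem measurableSet_Ioc] with t ht
      exact ptwise x ht
    refine step.trans ?_
    rw [lintegral_const_mul' _ _ ENNReal.ofReal_ne_top]
    exact mul_le_mul_right (le_iSup (fun x : E d => ∫⁻ t in Set.Ioc (0:ℝ) h,
      (heatSem d t (bsq d b) x) ^ (1/2:ℝ) * ENNReal.ofReal (t ^ (-(1:ℝ)/2))) x) _
  constructor
  · exact iSup_le hxbound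
  · exact lt_of_le_of_lt (iSup_le hxbound)
      (ENNReal.mul_lt_top ENNReal.ofReal_lt_top (lt_top_iff_ne_top.2 hnash))
end
end

section
/- Let d ≥ 3 and let 1/d < α ≤ 1. Define b : ℝ^d → [0,∞) by b(x) = 1_{B(0,e^{-1})}(x) · |x|^{-1} · |log|x||^{-α}. Then b ∈ L^d(ℝ^d), but κ_{d+1}(b,h) = ∞ for every h > 0. In particular, L^d(ℝ^d) is not contained in the Kato class K^{d+1}. -/
open MeasureTheory ENNReal

noncomputable section

/-- The Kato norm `κ_{d+1}(b,h)` of a scalar nonnegative function `b`. -/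
def katoNormScalar (d : ℕ) (b : E d → ℝ) (h : ℝ) : ℝ≥0∞ :=
  ⨆ x : E d, ∫⁻ t in Set.Ioc (0 : ℝ) h,
    heatSem d t (fun y => ENNReal.ofReal (b y)) x * ENNReal.ofReal (t ^ (-(1 : ℝ) / 2))

section Helpers

open Set Metric Module

/-- Polar-coordinates formula for the lower integral of a radial function with respect to
an additive Haar measure. -/
lemma lintegral_fun_norm_addHaar' {V : Type*} [NormedAddCommGroup V] [NormedSpace ℝ V]
    [MeasurableSpace V] [BorelSpace V] [FiniteDimensional ℝ V] [Nontrivial V]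
    (μ : Measure V) [μ.IsAddHaarMeasure] (f : ℝ → ℝ≥0∞) (hf : Measurable f) :
    ∫⁻ x, f ‖x‖ ∂μ = (finrank ℝ V) * μ (ball 0 1) *
      ∫⁻ r in Ioi (0:ℝ), ENNReal.ofReal (r ^ (finrank ℝ V - 1)) * f r := by
  have hm : Measurable (fun q : Ioi (0:ℝ) => f q.1) := hf.comp measurable_subtype_coe
  have h1 : ∫⁻ x, f ‖x‖ ∂μ = ∫⁻ x : ({(0:V)}ᶜ : Set V), f ‖x.1‖ ∂(μ.comap Subtype.val) := by
    rw [lintegral_subtype_comap (measurableSet_singleton _).compl (fun x => f ‖x‖),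
      MeasureTheory.restrict_compl_singleton]
  rw [h1]
  have h2 : ∫⁻ x : ({(0:V)}ᶜ : Set V), f ‖x.1‖ ∂(μ.comap Subtype.val)
      = ∫⁻ p : sphere (0:V) 1 × Ioi (0:ℝ), f p.2.1
          ∂(μ.toSphere.prod (.volumeIoiPow (finrank ℝ V - 1))) := by
    rw [← μ.measurePreserving_homeomorphUnitSphereProd.lintegral_comp_emb
      (Homeomorph.measurableEmbedding _) (fun p => f p.2.1)]
    simp
  rw [h2]
  have h3 : ∫⁻ p : sphere (0:V) 1 × Ioi (0:ℝ), f p.2.1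
          ∂(μ.toSphere.prod (.volumeIoiPow (finrank ℝ V - 1)))
      = μ.toSphere univ * ∫⁻ q : Ioi (0:ℝ), f q.1 ∂(Measure.volumeIoiPow (finrank ℝ V - 1)) := by
    rw [← lintegral_map hm measurable_snd, Measure.map_snd_prod, lintegral_smul_measure, smul_eq_mul]
  rw [h3, Measure.toSphere_apply_univ]
  congr 1
  rw [Measure.volumeIoiPow, lintegral_withDensity_eq_lintegral_mul _
    ((measurable_subtype_coe.pow_const _).ennreal_ofReal) hm]
  simp only [Pi.mul_apply]
  exact lintegral_subtype_comap measurableSet_Ioi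
    (fun r => ENNReal.ofReal (r ^ (finrank ℝ V - 1)) * f r)

/-- One-dimensional change of variables for lower integrals. -/
lemma lintegral_image_eq_lintegral_abs_deriv_mul' {s : Set ℝ} {f f' : ℝ → ℝ}
    (hs : MeasurableSet s) (hf' : ∀ x ∈ s, HasDerivWithinAt f (f' x) s x)
    (hf : Set.InjOn f s) (g : ℝ → ℝ≥0∞) :
    ∫⁻ x in f '' s, g x = ∫⁻ x in s, ENNReal.ofReal |f' x| * g (f x) := by
  simpa only [ContinuousLinearMap.det_toSpanSingleton] using
    MeasureTheory.lintegral_image_eq_lintegral_abs_det_fderiv_mul volume hs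
      (fun x hx => (hf' x hx).hasFDerivWithinAt) hf g

lemma exp_neg_image_Ioi_one :
    (fun u : ℝ => Real.exp (-u)) '' Ioi 1 = Ioo 0 (Real.exp (-1)) := by
  ext y
  constructor
  · rintro ⟨u, hu, rfl⟩
    exact ⟨Real.exp_pos _, Real.exp_lt_exp.2 (by simpa using hu)⟩
  · rintro ⟨hy0, hy1⟩
    refine ⟨-Real.log y, ?_, by simp [Real.exp_log hy0]⟩
    simp only [mem_Ioi]
    nlinarith [Real.log_lt_log hy0 hy1, Real.log_exp (-1:ℝ)]

/-- Finiteness of `∫_0^{1/e} r⁻¹ |log r|^{-β} dr` for `β > 1`. -/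
lemma finite_lintegral_inv_mul_abs_log_rpow {β : ℝ} (hβ : 1 < β) :
    ∫⁻ r in Ioo (0:ℝ) (Real.exp (-1)),
      ENNReal.ofReal (r⁻¹ * |Real.log r| ^ (-β)) < ⊤ := by
  have hderiv : ∀ u ∈ Ioi (1:ℝ),
      HasDerivWithinAt (fun u : ℝ => Real.exp (-u)) (-Real.exp (-u)) (Ioi 1) u := by
    intro u _
    simpa using ((hasDerivAt_neg u).exp).hasDerivWithinAt
  have hinj : Set.InjOn (fun u : ℝ => Real.exp (-u)) (Ioi 1) :=
    (Real.exp_injective.comp neg_injective).injOn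
  rw [← exp_neg_image_Ioi_one,
    lintegral_image_eq_lintegral_abs_deriv_mul' measurableSet_Ioi hderiv hinj]
  have hpt : ∀ u ∈ Ioi (1:ℝ),
      ENNReal.ofReal |(-Real.exp (-u))| *
        ENNReal.ofReal ((Real.exp (-u))⁻¹ * |Real.log (Real.exp (-u))| ^ (-β))
      ≤ ENNReal.ofReal (u ^ (-β)) := by
    intro u hu
    have hu0 : (0:ℝ) < u := lt_trans one_pos hu
    rw [abs_neg, abs_of_pos (Real.exp_pos _), ← ENNReal.ofReal_mul (Real.exp_pos _).le,
      Real.log_exp, abs_neg, abs_of_pos hu0, ← mul_assoc,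
      mul_inv_cancel₀ (Real.exp_ne_zero _), one_mul]
  refine lt_of_le_of_lt (setLIntegral_mono' measurableSet_Ioi hpt) ?_
  exact IntegrableOn.setLIntegral_lt_top
    (integrableOn_Ioi_rpow_of_lt (by linarith) one_pos)

/-- Divergence of `∫_0^ε dt/(t log(1/t))`. -/
lemma lintegral_inv_mul_neg_log_eq_top {ε : ℝ} (hε0 : 0 < ε) (hε1 : ε < 1) :
    ∫⁻ t in Ioc (0:ℝ) ε, ENNReal.ofReal ((t * (-Real.log t))⁻¹) = ⊤ := by
  apply ENNReal.eq_top_of_forall_nnreal_le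
  intro r
  have hLε : 0 < -Real.log ε := neg_pos.2 (Real.log_neg hε0 hε1)
  set c : ℝ := Real.log (-Real.log ε) with hc
  set δ : ℝ := Real.exp (-Real.exp ((r:ℝ) + c)) with hδ
  have hδ0 : 0 < δ := Real.exp_pos _
  have hexpc : Real.exp c = -Real.log ε := Real.exp_log hLε
  have hδε : δ ≤ ε := by
    rw [hδ, ← Real.exp_log hε0]
    apply Real.exp_le_exp.2
    have h1 : -Real.log ε ≤ Real.exp ((r:ℝ) + c) := by
      rw [Real.exp_add, hexpc]
      nlinarith [mul_le_mul_of_nonneg_right (Real.one_le_exp (r.coe_nonneg)) hLε.le]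
    linarith
  have hfacts : ∀ t ∈ Icc δ ε, 0 < t ∧ 0 < -Real.log t := by
    intro t ht
    have ht0 : 0 < t := lt_of_lt_of_le hδ0 ht.1
    have ht1 : t < 1 := lt_of_le_of_lt ht.2 hε1
    exact ⟨ht0, neg_pos.2 (Real.log_neg ht0 ht1)⟩
  set F : ℝ → ℝ := fun t => -Real.log (-Real.log t) with hF
  set f : ℝ → ℝ := fun t => (t * (-Real.log t))⁻¹ with hf
  have huIcc : uIcc δ ε = Icc δ ε := uIcc_of_le hδε
  have hderiv : ∀ t ∈ uIcc δ ε, HasDerivAt F (f t) t := by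
    intro t ht
    rw [huIcc] at ht
    obtain ⟨ht0, htL⟩ := hfacts t ht
    have h1 : HasDerivAt (fun u : ℝ => -Real.log u) (-t⁻¹) t :=
      (Real.hasDerivAt_log ht0.ne').neg
    have h2 : HasDerivAt (fun u : ℝ => Real.log (-Real.log u))
        ((-Real.log t)⁻¹ * -t⁻¹) t := by
      have := (Real.hasDerivAt_log htL.ne').comp t h1; exact this
    have h3 : HasDerivAt F (-((-Real.log t)⁻¹ * -t⁻¹)) t := h2.neg
    convert h3 using 1
    show (t * -Real.log t)⁻¹ = -((-Real.log t)⁻¹ * -t⁻¹)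
    rw [mul_inv]
    ring
  have hcont : ContinuousOn f (uIcc δ ε) := by
    rw [huIcc]
    apply ContinuousOn.inv₀
    · exact continuousOn_id.mul ((Real.continuousOn_log.mono
        (fun t ht => (hfacts t ht).1.ne')).neg)
    · intro t ht
      obtain ⟨ht0, htL⟩ := hfacts t ht
      positivity
  have hInt : IntervalIntegrable f volume δ ε := hcont.intervalIntegrable
  have hFTC : ∫ t in δ..ε, f t = (r : ℝ) := by
    rw [intervalIntegral.integral_eq_sub_of_hasDerivAt hderiv hInt]
    have hlogδ : Real.log δ = -Real.exp ((r:ℝ) + c) := Real.log_exp _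
    rw [hF]
    simp only [hlogδ, neg_neg, Real.log_exp]
    ring
  have hnn : 0 ≤ᵐ[volume.restrict (Ioc δ ε)] f := by
    filter_upwards [ae_restrict_mem measurableSet_Ioc] with t ht
    obtain ⟨ht0, htL⟩ := hfacts t ⟨ht.1.le, ht.2⟩
    positivity
  calc (r : ℝ≥0∞) = ENNReal.ofReal (∫ t in δ..ε, f t) := by
        rw [hFTC, ENNReal.ofReal_coe_nnreal]
    _ = ENNReal.ofReal (∫ t in Ioc δ ε, f t) := by
        rw [intervalIntegral.integral_of_le hδε]
    _ = ∫⁻ t in Ioc δ ε, ENNReal.ofReal (f t) :=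
        ofReal_integral_eq_lintegral_ofReal
          ((intervalIntegrable_iff_integrableOn_Ioc_of_le hδε).1 hInt) hnn
    _ ≤ ∫⁻ t in Ioc (0:ℝ) ε, ENNReal.ofReal (f t) :=
        lintegral_mono_set (Ioc_subset_Ioc_left hδ0.le)

/-- The algebraic computation behind the heat-kernel lower bound. -/
lemma kato_real_alg (d : ℕ) (α t : ℝ) (ht : 0 < t) :
    (4*Real.pi*1*t)^(-(d:ℝ)/2) * Real.exp (-1) *
      ((2*Real.sqrt t)⁻¹ * (-Real.log t)^(-α)) *
      ((2*Real.sqrt t)^d - (Real.sqrt t)^d) * t^(-(1:ℝ)/2)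
    = (Real.exp (-1) * (4*Real.pi)^(-(d:ℝ)/2) * ((2:ℝ)^d - 1) / 2) * t⁻¹ *
        (-Real.log t)^(-α) := by
  have hs : Real.sqrt t = t ^ ((1:ℝ)/2) := Real.sqrt_eq_rpow t
  have hrs : (Real.sqrt t) ^ d = t ^ ((d:ℝ)/2) := by
    rw [hs, ← Real.rpow_natCast (t ^ ((1:ℝ)/2)) d, ← Real.rpow_mul ht.le]
    norm_num
    ring_nf
  have hsinv : (Real.sqrt t)⁻¹ = t ^ (-(1:ℝ)/2) := by
    rw [hs, ← Real.rpow_neg ht.le]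
    norm_num
  have hmul : (4*Real.pi*1*t) ^ (-(d:ℝ)/2) = (4*Real.pi) ^ (-(d:ℝ)/2) * t ^ (-(d:ℝ)/2) := by
    rw [mul_one, Real.mul_rpow (by positivity) ht.le]
  have hT : t ^ (-(d:ℝ)/2) * t ^ (-(1:ℝ)/2) * t ^ ((d:ℝ)/2) * t ^ (-(1:ℝ)/2) = t⁻¹ := by
    rw [← Real.rpow_add ht, ← Real.rpow_add ht, ← Real.rpow_add ht,
      show (-(d:ℝ)/2 + -(1:ℝ)/2 + (d:ℝ)/2 + -(1:ℝ)/2) = -1 by ring, Real.rpow_neg_one]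
  rw [hmul, mul_pow, hrs, mul_inv, hsinv]
  linear_combination (Real.exp (-1) * (4*Real.pi)^(-(d:ℝ)/2) * ((2:ℝ)^d - 1) * 2⁻¹ *
    (-Real.log t)^(-α)) * hT

end Helpers

set_option maxHeartbeats 2000000 in
/-- For `d ≥ 3` and `1/d < α ≤ 1`, the function
`b(x) = 1_{B(0,e⁻¹)}(x) |x|⁻¹ |log|x||^{-α}` belongs to `L^d(ℝ^d)` but has
`κ_{d+1}(b,h) = ∞` for every `h > 0`; in particular `L^d ⊄ K^{d+1}`. -/
theorem Ld_not_subset_Kato (d : ℕ) (hd : 3 ≤ d) (α : ℝ)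
    (hα1 : 1 / (d : ℝ) < α) (hα2 : α ≤ 1)
    (b : E d → ℝ)
    (hbval : b = fun x : E d =>
      Set.indicator (Metric.ball (0 : E d) (Real.exp (-1)))
        (fun x => ‖x‖⁻¹ * (abs (Real.log ‖x‖)) ^ (-α)) x) :
    MemLp b (d : ℝ≥0∞) volume ∧ ∀ h > (0 : ℝ), katoNormScalar d b h = ⊤ := by
  classical
  have hdne : d ≠ 0 := by omega
  have hd0 : (0:ℝ) < d := by exact_mod_cast Nat.pos_of_ne_zero hdne
  have hα0 : 0 < α := lt_trans (by positivity) hα1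
  haveI : Nonempty (Fin d) := ⟨⟨0, by omega⟩⟩
  haveI : Nontrivial (E d) := inferInstance
  set R : ℝ := Real.exp (-1) with hRdef
  have hR0 : 0 < R := Real.exp_pos _
  have hR1 : R < 1 := Real.exp_lt_one_iff.2 (by norm_num)
  set ψ : ℝ → ℝ := fun r => r⁻¹ * |Real.log r| ^ (-α) with hψdef
  have hψm : Measurable ψ :=
    measurable_inv.mul ((Real.measurable_log.abs).pow measurable_const)
  have hψnn : ∀ r, 0 ≤ r → 0 ≤ ψ r := fun r hr => by
    simp only [hψdef]; positivity
  have hbψ : ∀ x : E d, b x = Set.indicator (Set.Iio R) ψ ‖x‖ := by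
    intro x
    rw [hbval]
    simp only [hψdef, Set.indicator_apply, mem_ball_zero_iff, Set.mem_Iio]
  have hbm : Measurable b := by
    rw [hbval]
    exact (hψm.comp measurable_norm).indicator measurableSet_ball
  have hbnn : ∀ x, 0 ≤ b x := fun x => by
    rw [hbψ x, Set.indicator_apply]
    split_ifs
    · exact hψnn _ (norm_nonneg x)
    · exact le_refl 0
  constructor
  · -- Memℒp
    refine ⟨hbm.aestronglyMeasurable, ?_⟩
    have hdne0 : (d:ℝ≥0∞) ≠ 0 := by exact_mod_cast hdne
    rw [eLpNorm_eq_lintegral_rpow_enorm_toReal hdne0 (by simp : (d:ℝ≥0∞) ≠ ⊤)]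
    refine ENNReal.rpow_lt_top_of_nonneg (by positivity) ?_
    simp only [ENNReal.toReal_natCast]
    set f : ℝ → ℝ≥0∞ := fun r =>
      (ENNReal.ofReal (Set.indicator (Set.Iio R) ψ r)) ^ (d:ℝ) with hfdef
    have hfm : Measurable f :=
      ((hψm.indicator measurableSet_Iio).ennreal_ofReal).pow measurable_const
    have hpt : ∀ x : E d, ‖b x‖ₑ ^ (d:ℝ) = f ‖x‖ := by
      intro x
      rw [Real.enorm_eq_ofReal (hbnn x), hbψ x, hfdef]
    rw [lintegral_congr hpt, lintegral_fun_norm_addHaar' volume f hfm]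
    simp only [finrank_euclideanSpace_fin]
    have hβ : 1 < α * d := by
      rw [div_lt_iff₀ hd0] at hα1
      exact hα1
    have hinner : ∫⁻ r in Set.Ioi (0:ℝ), ENNReal.ofReal (r ^ (d-1)) * f r < ⊤ := by
      have hb1 : ∀ r ∈ Set.Ioi (0:ℝ), ENNReal.ofReal (r ^ (d-1)) * f r ≤
          (Set.Ioo (0:ℝ) R).indicator
            (fun r => ENNReal.ofReal (r⁻¹ * |Real.log r| ^ (-(α * d)))) r := by
        intro r hr
        rw [Set.mem_Ioi] at hr
        by_cases hrR : r < R
        · rw [Set.indicator_of_mem (Set.mem_Ioo.2 ⟨hr, hrR⟩), hfdef]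
          simp only
          rw [Set.indicator_of_mem (Set.mem_Iio.2 hrR),
            ENNReal.ofReal_rpow_of_nonneg (hψnn r hr.le) (by positivity),
            ← ENNReal.ofReal_mul (by positivity)]
          apply le_of_eq
          congr 1
          have e1 : ψ r ^ (d:ℝ) = (r ^ (d:ℝ))⁻¹ * |Real.log r| ^ (-α * d) := by
            rw [hψdef]
            simp only
            rw [Real.mul_rpow (inv_nonneg.2 hr.le) (Real.rpow_nonneg (abs_nonneg _) _),
              Real.inv_rpow hr.le, ← Real.rpow_mul (abs_nonneg _)]
          have e2 : (r:ℝ) ^ (d-1) * (r ^ (d:ℝ))⁻¹ = r⁻¹ := by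
            have hc : ((d-1:ℕ):ℝ) = (d:ℝ) - 1 := by
              rw [Nat.cast_sub (by omega : 1 ≤ d), Nat.cast_one]
            rw [← Real.rpow_natCast r (d-1), ← Real.rpow_neg hr.le, ← Real.rpow_add hr,
              hc, show (d:ℝ) - 1 + -(d:ℝ) = -1 by ring, Real.rpow_neg_one]
          rw [e1, ← mul_assoc, e2, neg_mul]
        · rw [hfdef]
          simp only
          rw [Set.indicator_of_notMem (fun hmem => hrR (Set.mem_Iio.1 hmem)),
            ENNReal.ofReal_zero, ENNReal.zero_rpow_of_pos (by positivity), mul_zero]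
          exact zero_le
      calc ∫⁻ r in Set.Ioi (0:ℝ), ENNReal.ofReal (r ^ (d-1)) * f r
          ≤ ∫⁻ r in Set.Ioi (0:ℝ), (Set.Ioo (0:ℝ) R).indicator
              (fun r => ENNReal.ofReal (r⁻¹ * |Real.log r| ^ (-(α * d)))) r :=
            setLIntegral_mono' measurableSet_Ioi hb1
        _ ≤ ∫⁻ r, (Set.Ioo (0:ℝ) R).indicator
              (fun r => ENNReal.ofReal (r⁻¹ * |Real.log r| ^ (-(α * d)))) r :=
            setLIntegral_le_lintegral _ _
        _ = ∫⁻ r in Set.Ioo (0:ℝ) R,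
              ENNReal.ofReal (r⁻¹ * |Real.log r| ^ (-(α * d))) :=
            lintegral_indicator measurableSet_Ioo _
        _ < ⊤ := finite_lintegral_inv_mul_abs_log_rpow hβ
    exact (ENNReal.mul_lt_top
      (ENNReal.mul_lt_top (ENNReal.natCast_lt_top d) measure_ball_lt_top) hinner).ne
  · -- Kato norm infinite
    intro h hh
    set G : E d → ℝ≥0∞ := fun x => ∫⁻ t in Set.Ioc (0 : ℝ) h,
      heatSem d t (fun y => ENNReal.ofReal (b y)) x * ENNReal.ofReal (t ^ (-(1 : ℝ) / 2))
      with hGdef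
    suffices hkey : G 0 = ⊤ by
      have h1 : katoNormScalar d b h = ⨆ x : E d, G x := rfl
      rw [h1]
      exact top_unique (hkey ▸ le_iSup G 0)
    set ε : ℝ := min h (Real.exp (-5)) with hεdef
    have hε0 : 0 < ε := lt_min hh (Real.exp_pos _)
    have hε1 : ε < 1 := lt_of_le_of_lt (min_le_right _ _) (Real.exp_lt_one_iff.2 (by norm_num))
    have hεh : ε ≤ h := min_le_left _ _
    set V : ℝ≥0∞ := volume (Metric.ball (0:E d) 1) with hVdef
    set c0 : ℝ := Real.exp (-1) * (4*Real.pi)^(-(d:ℝ)/2) * ((2:ℝ)^d - 1) / 2 with hc0def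
    have h2d : (1:ℝ) < 2 ^ d := one_lt_pow₀ (by norm_num) hdne
    have hc0 : 0 < c0 := by
      rw [hc0def]
      apply div_pos _ two_pos
      apply mul_pos (mul_pos (Real.exp_pos _) (Real.rpow_pos_of_pos (by positivity) _))
      linarith
    set C : ℝ≥0∞ := ENNReal.ofReal c0 * V with hCdef
    have hCne0 : C ≠ 0 := by
      rw [hCdef]
      exact mul_ne_zero (ENNReal.ofReal_pos.2 hc0).ne'
        (Metric.measure_ball_pos volume 0 one_pos).ne'
    have hCnetop : C ≠ ⊤ := by
      rw [hCdef]
      exact ENNReal.mul_ne_top ENNReal.ofReal_ne_top measure_ball_lt_top.ne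
    have hbound : ∀ t ∈ Set.Ioc (0:ℝ) ε,
        C * ENNReal.ofReal ((t * (-Real.log t))⁻¹) ≤
          heatSem d t (fun y => ENNReal.ofReal (b y)) 0 *
            ENNReal.ofReal (t ^ (-(1:ℝ)/2)) := by
      intro t ht
      obtain ⟨ht0, htε⟩ := ht
      have hte5 : t ≤ Real.exp (-5) := le_trans htε (min_le_right _ _)
      have hs0 : 0 < Real.sqrt t := Real.sqrt_pos.2 ht0
      have hst : Real.sqrt t ^ 2 = t := Real.sq_sqrt ht0.le
      have h2sR : 2 * Real.sqrt t < R := by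
        have hRsq : R^2 = Real.exp (-2) := by
          rw [hRdef, sq, ← Real.exp_add]; norm_num
        have h4 : (4:ℝ) < Real.exp 3 := by
          nlinarith [Real.add_one_lt_exp (by norm_num : (3:ℝ) ≠ 0)]
        have h1 : (2 * Real.sqrt t)^2 < R^2 := by
          rw [hRsq, mul_pow, hst]
          calc (2:ℝ)^2 * t ≤ 4 * Real.exp (-5) := by nlinarith
            _ < Real.exp 3 * Real.exp (-5) := by nlinarith [Real.exp_pos (-5:ℝ)]
            _ = Real.exp (-2) := by rw [← Real.exp_add]; norm_num
        exact lt_of_pow_lt_pow_left₀ 2 hR0.le h1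
      have hL5 : 5 ≤ -Real.log t := by
        have h1 := Real.log_le_log ht0 hte5
        rw [Real.log_exp] at h1
        linarith
      have hL0 : 0 < -Real.log t := by linarith
      have hL1 : 1 ≤ -Real.log t := by linarith
      set K : ℝ := (4*Real.pi*1*t)^(-(d:ℝ)/2) * Real.exp (-1) *
        ((2*Real.sqrt t)⁻¹ * (-Real.log t)^(-α)) with hKdef
      have hKnn : 0 ≤ K := by rw [hKdef]; positivity
      have hWnn : (0:ℝ) ≤ (2*Real.sqrt t)^d - (Real.sqrt t)^d := by
        have := pow_le_pow_left₀ hs0.le (by linarith : Real.sqrt t ≤ 2*Real.sqrt t) d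
        linarith
      have hptA : ∀ y ∈ Metric.ball (0:E d) (2*Real.sqrt t) \ Metric.ball (0:E d) (Real.sqrt t),
          ENNReal.ofReal K ≤
            ENNReal.ofReal (gaussK d 1 t ((0:E d) - y)) * ENNReal.ofReal (b y) := by
        intro y hy
        obtain ⟨hy1, hy2⟩ := hy
        rw [mem_ball_zero_iff] at hy1
        have hy2' : Real.sqrt t ≤ ‖y‖ := by
          by_contra hcon
          exact hy2 (mem_ball_zero_iff.2 (lt_of_not_ge hcon))
        have hyn0 : 0 < ‖y‖ := lt_of_lt_of_le hs0 hy2'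
        have hy1R : ‖y‖ < R := lt_trans hy1 h2sR
        have hylt1 : ‖y‖ < 1 := lt_trans hy1R hR1
        have hgauss : (4*Real.pi*1*t)^(-(d:ℝ)/2) * Real.exp (-1) ≤ gaussK d 1 t (0 - y) := by
          rw [gaussK, zero_sub, norm_neg]
          apply mul_le_mul_of_nonneg_left _ (le_of_lt (Real.rpow_pos_of_pos (by positivity) _))
          apply Real.exp_le_exp.2
          rw [neg_div, neg_le_neg_iff, div_le_one (by positivity)]
          nlinarith
        have hbb : (2*Real.sqrt t)⁻¹ * (-Real.log t)^(-α) ≤ b y := by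
          rw [hbψ y, Set.indicator_of_mem (Set.mem_Iio.2 hy1R), hψdef]
          simp only
          have hlogy : |Real.log ‖y‖| = -Real.log ‖y‖ :=
            abs_of_neg (Real.log_neg hyn0 hylt1)
          rw [hlogy]
          have hlogy0 : 0 < -Real.log ‖y‖ := neg_pos.2 (Real.log_neg hyn0 hylt1)
          have hlogb : -Real.log ‖y‖ ≤ -Real.log t := by
            have h1 : Real.log (Real.sqrt t) ≤ Real.log ‖y‖ := Real.log_le_log hs0 hy2'
            have h2 : Real.log (Real.sqrt t) = Real.log t / 2 := Real.log_sqrt ht0.le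
            linarith
          apply mul_le_mul
          · exact inv_anti₀ hyn0 hy1.le
          · exact Real.rpow_le_rpow_of_nonpos hlogy0 hlogb (by linarith)
          · positivity
          · exact inv_nonneg.2 (norm_nonneg _)
        calc ENNReal.ofReal K
            ≤ ENNReal.ofReal ((gaussK d 1 t (0-y)) * b y) := by
              apply ENNReal.ofReal_le_ofReal
              rw [hKdef]
              exact mul_le_mul hgauss hbb (by positivity) (le_trans (by positivity) hgauss)
          _ = _ := ENNReal.ofReal_mul (le_trans (by positivity) hgauss)
      have hheat : ENNReal.ofReal K *
          volume (Metric.ball (0:E d) (2*Real.sqrt t) \ Metric.ball (0:E d) (Real.sqrt t)) ≤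
          heatSem d t (fun y => ENNReal.ofReal (b y)) 0 := by
        calc ENNReal.ofReal K *
            volume (Metric.ball (0:E d) (2*Real.sqrt t) \ Metric.ball (0:E d) (Real.sqrt t))
            = ∫⁻ _ in Metric.ball (0:E d) (2*Real.sqrt t) \ Metric.ball (0:E d) (Real.sqrt t),
                ENNReal.ofReal K ∂volume := (setLIntegral_const _ _).symm
          _ ≤ ∫⁻ y in Metric.ball (0:E d) (2*Real.sqrt t) \ Metric.ball (0:E d) (Real.sqrt t),
                ENNReal.ofReal (gaussK d 1 t ((0:E d) - y)) * ENNReal.ofReal (b y) ∂volume :=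
              setLIntegral_mono' (measurableSet_ball.diff measurableSet_ball) hptA
          _ ≤ ∫⁻ y, ENNReal.ofReal (gaussK d 1 t ((0:E d) - y)) * ENNReal.ofReal (b y) ∂volume :=
              setLIntegral_le_lintegral _ _
          _ = heatSem d t (fun y => ENNReal.ofReal (b y)) 0 := rfl
      have hvolA : volume (Metric.ball (0:E d) (2*Real.sqrt t) \ Metric.ball (0:E d) (Real.sqrt t))
          = ENNReal.ofReal ((2*Real.sqrt t)^d - (Real.sqrt t)^d) * V := by
        rw [measure_diff (Metric.ball_subset_ball (by linarith))
            measurableSet_ball.nullMeasurableSet measure_ball_lt_top.ne,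
          Measure.addHaar_ball volume _ (by positivity : (0:ℝ) ≤ 2*Real.sqrt t),
          Measure.addHaar_ball volume _ hs0.le]
        simp only [finrank_euclideanSpace_fin]
        rw [← ENNReal.sub_mul (fun _ _ => measure_ball_lt_top.ne),
          ← ENNReal.ofReal_sub _ (by positivity)]
      have hreal : c0 * (t * (-Real.log t))⁻¹ ≤
          K * ((2*Real.sqrt t)^d - (Real.sqrt t)^d) * t^(-(1:ℝ)/2) := by
        rw [hKdef, kato_real_alg d α t ht0, ← hc0def]
        have e1 : (t * (-Real.log t))⁻¹ = t⁻¹ * (-Real.log t)^(-(1:ℝ)) := by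
          rw [mul_inv, Real.rpow_neg_one]
        rw [e1, ← mul_assoc]
        exact mul_le_mul_of_nonneg_left
          (Real.rpow_le_rpow_of_exponent_le hL1 (by linarith))
          (mul_nonneg hc0.le (inv_nonneg.2 ht0.le))
      calc C * ENNReal.ofReal ((t * (-Real.log t))⁻¹)
          = ENNReal.ofReal (c0 * (t * (-Real.log t))⁻¹) * V := by
            rw [hCdef, ENNReal.ofReal_mul hc0.le]; ring
        _ ≤ ENNReal.ofReal (K * ((2*Real.sqrt t)^d - (Real.sqrt t)^d) * t^(-(1:ℝ)/2)) * V :=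
            mul_le_mul_left (ENNReal.ofReal_le_ofReal hreal) V
        _ = ENNReal.ofReal K * (ENNReal.ofReal ((2*Real.sqrt t)^d - (Real.sqrt t)^d) * V) *
              ENNReal.ofReal (t^(-(1:ℝ)/2)) := by
            rw [ENNReal.ofReal_mul (mul_nonneg hKnn hWnn), ENNReal.ofReal_mul hKnn]; ring
        _ = ENNReal.ofReal K *
              volume (Metric.ball (0:E d) (2*Real.sqrt t) \ Metric.ball (0:E d) (Real.sqrt t)) *
              ENNReal.ofReal (t^(-(1:ℝ)/2)) := by rw [hvolA]
        _ ≤ heatSem d t (fun y => ENNReal.ofReal (b y)) 0 * ENNReal.ofReal (t^(-(1:ℝ)/2)) :=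
            mul_le_mul_left hheat _
    have htop : (⊤:ℝ≥0∞) ≤ G 0 := by
      calc (⊤:ℝ≥0∞)
          = C * ∫⁻ t in Set.Ioc (0:ℝ) ε, ENNReal.ofReal ((t * (-Real.log t))⁻¹) := by
            rw [lintegral_inv_mul_neg_log_eq_top hε0 hε1, ENNReal.mul_top hCne0]
        _ = ∫⁻ t in Set.Ioc (0:ℝ) ε, C * ENNReal.ofReal ((t * (-Real.log t))⁻¹) :=
            (lintegral_const_mul' C _ hCnetop).symm
        _ ≤ ∫⁻ t in Set.Ioc (0:ℝ) ε,
              heatSem d t (fun y => ENNReal.ofReal (b y)) 0 *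
                ENNReal.ofReal (t ^ (-(1:ℝ)/2)) :=
            setLIntegral_mono' measurableSet_Ioc hbound
        _ ≤ ∫⁻ t in Set.Ioc (0:ℝ) h,
              heatSem d t (fun y => ENNReal.ofReal (b y)) 0 *
                ENNReal.ofReal (t ^ (-(1:ℝ)/2)) :=
            lintegral_mono_set (Set.Ioc_subset_Ioc_right hεh)
        _ = G 0 := rfl
    exact top_unique htop
end
end

section
/- Let d ≥ 3, let p > 1 and let α satisfy 1/p ≤ α < 1. Define b : ℝ^d → [0,∞) by b(x) = 1_{B(0,1)}(x) · |x_1|^{-α}, where x = (x_1,…,x_d). Then κ_{d+1}(b,h) < ∞ for every h > 0 (so b belongs to the Kato class K^{d+1}), while ∫_{B(0,1)} b(x)^p dx = ∞ (so b ∉ L^p_loc(ℝ^d)). -/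
open MeasureTheory ENNReal ProbabilityTheory

noncomputable section

lemma meas_absrpow (α : ℝ) : Measurable (fun s : ℝ => ENNReal.ofReal (|s| ^ (-α))) :=
  (measurable_abs.pow measurable_const).ennreal_ofReal
theorem lintegral_pi_prod {n : ℕ} (f : Fin n → ℝ → ℝ≥0∞) (hf : ∀ i, Measurable (f i)) :
    ∫⁻ x : Fin n → ℝ, ∏ i, f i (x i) = ∏ i, ∫⁻ s, f i s := by
  induction n with
  | zero => simp [volume_pi]
  | succ n ih =>
      have A := (measurePreserving_piFinSuccAbove (fun _ : Fin (n+1) => (volume : Measure ℝ)) 0).symm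
      rw [volume_pi, ← A.lintegral_comp_emb (MeasurableEquiv.measurableEmbedding _)]
      simp only [MeasurableEquiv.piFinSuccAbove_symm_apply, Fin.insertNthEquiv,
        Fin.insertNth_zero, Equiv.coe_fn_mk, Fin.zero_succAbove, Fin.cons_zero,
        Fin.cons_succ, Fin.prod_univ_succ, cast_eq]
      rw [lintegral_prod_mul (f := fun s => f 0 s)
        (g := fun w : Fin n → ℝ => ∏ i : Fin n, f i.succ (w i)) (hf 0).aemeasurable
        (Finset.measurable_prod _ fun i _ => (hf i.succ).comp (measurable_pi_apply i)).aemeasurable,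
        ← volume_pi, ih _ fun i => hf i.succ]
lemma gaussK_eq_prod (d : ℕ) {t : ℝ} (ht : 0 < t) (x y : E d) :
    gaussK d 1 t (x - y) = ∏ i, gaussianPDFReal (x i) (2*t).toNNReal (y i) := by
  have h4 : (0:ℝ) < 4 * Real.pi * t := by positivity
  have hv : ((2*t).toNNReal : ℝ) = 2*t := Real.coe_toNNReal _ (by positivity)
  unfold gaussK gaussianPDFReal
  rw [EuclideanSpace.norm_eq, Real.sq_sqrt (by positivity)]
  simp only [hv, Real.norm_eq_abs, sq_abs]
  rw [show (4*Real.pi*1*t) = 4*Real.pi*t by ring,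
    show (-(d:ℝ)/2) = (-(1:ℝ)/2)*(d:ℝ) by ring,
    Real.rpow_mul h4.le, Real.rpow_natCast,
    Finset.prod_mul_distrib, Finset.prod_const, Finset.card_univ, Fintype.card_fin,
    ← Real.exp_sum]
  have hxy : ∀ i, (x - y) i = x i - y i := fun i => by simp
  congr 1
  · congr 1
    rw [show (-(1:ℝ)/2) = -(1/2) by ring, Real.rpow_neg h4.le, ← Real.sqrt_eq_rpow,
      show (2*Real.pi*(2*t)) = 4*Real.pi*t by ring]
  · congr 1
    rw [neg_div, Finset.sum_div, ← Finset.sum_neg_distrib]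
    exact Finset.sum_congr rfl fun i _ => by rw [hxy i]; ring
lemma lintegral_Ioo_abs_rpow {α u : ℝ} (hα0 : 0 < α) (hα1 : α < 1) (hu : 0 < u) :
    ∫⁻ s in Set.Ioo (-u) u, ENNReal.ofReal (|s| ^ (-α))
      ≤ ENNReal.ofReal (2/(1-α) * u ^ (1-α)) := by
  have key : ∫⁻ s in Set.Ioo (0:ℝ) u, ENNReal.ofReal (|s| ^ (-α))
      = ENNReal.ofReal (u ^ (1-α) / (1-α)) := by
    rw [setLIntegral_congr_fun measurableSet_Ioo
      ((fun s hs => by rw [abs_of_pos hs.1] :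
        ∀ s ∈ Set.Ioo (0:ℝ) u, ENNReal.ofReal (|s| ^ (-α)) = ENNReal.ofReal (s ^ (-α))))]
    have hint : IntegrableOn (fun s : ℝ => s ^ (-α)) (Set.Ioo 0 u) := by
      rw [intervalIntegral.integrableOn_Ioo_rpow_iff hu]; linarith
    rw [← ofReal_integral_eq_lintegral_ofReal hint
      (((ae_restrict_mem measurableSet_Ioo).mono fun s hs => Real.rpow_nonneg hs.1.le _))]
    congr 1
    rw [show ∫ s in Set.Ioo (0:ℝ) u, s ^ (-α) = ∫ s in (0:ℝ)..u, s ^ (-α) by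
        rw [intervalIntegral.integral_of_le hu.le, integral_Ioc_eq_integral_Ioo],
      integral_rpow (Or.inl (by linarith)), Real.zero_rpow (by linarith : -α + 1 ≠ 0),
      show (-α + 1) = 1 - α by ring, sub_zero]
  have hneg : ∫⁻ s in Set.Ioc (-u) (0:ℝ), ENNReal.ofReal (|s| ^ (-α))
      = ∫⁻ s in Set.Ico (0:ℝ) u, ENNReal.ofReal (|s| ^ (-α)) := by
    have h2 := (Measure.measurePreserving_neg (volume : Measure ℝ)).setLIntegral_comp_preimage
      (s := Set.Ioc (-u) 0) measurableSet_Ioc (meas_absrpow α)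
    rw [show (Neg.neg ⁻¹' Set.Ioc (-u) 0 : Set ℝ) = Set.Ico 0 u by
        ext s
        simp only [Set.mem_preimage, Set.mem_Ioc, Set.mem_Ico]
        constructor <;> rintro ⟨h1, h2⟩ <;> constructor <;> linarith] at h2
    rw [← h2]
    exact setLIntegral_congr_fun measurableSet_Ico (fun s hs => by rw [abs_neg])
  calc ∫⁻ s in Set.Ioo (-u) u, ENNReal.ofReal (|s| ^ (-α))
      ≤ ∫⁻ s in Set.Ioc (-u) 0 ∪ Set.Ioo 0 u, ENNReal.ofReal (|s| ^ (-α)) := by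
        refine lintegral_mono_set fun s hs => ?_
        rcases le_or_gt s 0 with h | h
        · exact Or.inl ⟨hs.1, h⟩
        · exact Or.inr ⟨h, hs.2⟩
    _ ≤ (∫⁻ s in Set.Ioc (-u) 0, ENNReal.ofReal (|s| ^ (-α)))
        + ∫⁻ s in Set.Ioo 0 u, ENNReal.ofReal (|s| ^ (-α)) := lintegral_union_le _ _ _
    _ = (∫⁻ s in Set.Ioo (0:ℝ) u, ENNReal.ofReal (|s| ^ (-α)))
        + ∫⁻ s in Set.Ioo 0 u, ENNReal.ofReal (|s| ^ (-α)) := by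
        rw [hneg, setLIntegral_congr (Ioo_ae_eq_Ico (a := (0:ℝ)) (b := u)).symm]
    _ = ENNReal.ofReal (u ^ (1-α) / (1-α)) + ENNReal.ofReal (u ^ (1-α) / (1-α)) := by
        rw [key]
    _ ≤ ENNReal.ofReal (2/(1-α) * u ^ (1-α)) := by
        have h1α : (0:ℝ) < 1 - α := by linarith
        rw [← ENNReal.ofReal_add (by positivity) (by positivity)]
        exact ENNReal.ofReal_le_ofReal (le_of_eq (by ring))
lemma lemA {α t : ℝ} (hα0 : 0 < α) (hα1 : α < 1) (ht : 0 < t) (c : ℝ) :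
    ∫⁻ s, ENNReal.ofReal (gaussianPDFReal c (2*t).toNNReal s) * ENNReal.ofReal (|s| ^ (-α))
      ≤ ENNReal.ofReal (2/(1-α) + 1) * ENNReal.ofReal (t ^ (-α/2)) := by
  have h1α : (0:ℝ) < 1 - α := by linarith
  set u := Real.sqrt t with hu_def
  have hu : 0 < u := Real.sqrt_pos.2 ht
  have hvne : (2*t).toNNReal ≠ 0 := by
    simp only [ne_eq, Real.toNNReal_eq_zero, not_le]; linarith
  have hv : ((2*t).toNNReal : ℝ) = 2*t := Real.coe_toNNReal _ (by linarith)
  have hut : u ^ (1 - α) = t ^ ((1-α)/2) := by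
    rw [hu_def, Real.sqrt_eq_rpow, ← Real.rpow_mul ht.le]
    congr 1; ring
  have hg_le : ∀ s : ℝ, gaussianPDFReal c (2*t).toNNReal s ≤ t ^ (-(1:ℝ)/2) := by
    intro s
    have h1 : Real.sqrt t ≤ Real.sqrt (2 * Real.pi * ((2*t).toNNReal : ℝ)) := by
      rw [hv]
      apply Real.sqrt_le_sqrt
      nlinarith [Real.pi_gt_three]
    have h2 : (Real.sqrt (2 * Real.pi * ((2*t).toNNReal : ℝ)))⁻¹ ≤ (Real.sqrt t)⁻¹ := by
      apply inv_anti₀ hu h1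
    have h3 : t ^ (-(1:ℝ)/2) = (Real.sqrt t)⁻¹ := by
      rw [show (-(1:ℝ)/2) = -(1/2) by ring, Real.rpow_neg ht.le, ← Real.sqrt_eq_rpow]
    rw [h3, gaussianPDFReal]
    calc (Real.sqrt (2 * Real.pi * ((2*t).toNNReal : ℝ)))⁻¹ * Real.exp (-(s - c)^2 / (2 * ((2*t).toNNReal : ℝ)))
        ≤ (Real.sqrt (2 * Real.pi * ((2*t).toNNReal : ℝ)))⁻¹ * 1 := by
          apply mul_le_mul_of_nonneg_left _ (by positivity)
          rw [Real.exp_le_one_iff]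
          rw [hv]
          apply div_nonpos_of_nonpos_of_nonneg (by nlinarith [sq_nonneg (s - c)]) (by linarith)
      _ ≤ (Real.sqrt t)⁻¹ := by rw [mul_one]; exact h2
  have habs_le : ∀ s : ℝ, s ∉ Set.Ioo (-u) u → |s| ^ (-α) ≤ t ^ (-α/2) := by
    intro s hs
    have hus : u ≤ |s| := by
      by_contra h'
      push_neg at h'
      exact hs (abs_lt.1 h')
    have h1 : u ^ α ≤ |s| ^ α := Real.rpow_le_rpow hu.le hus hα0.le
    have h2 : |s| ^ (-α) ≤ u ^ (-α) := by
      rw [Real.rpow_neg (abs_nonneg s), Real.rpow_neg hu.le]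
      exact inv_anti₀ (Real.rpow_pos_of_pos hu _) h1
    refine h2.trans (le_of_eq ?_)
    rw [hu_def, Real.sqrt_eq_rpow, ← Real.rpow_mul ht.le]
    congr 1; ring
  set F1 : ℝ → ℝ≥0∞ := Set.indicator (Set.Ioo (-u) u)
    (fun s => ENNReal.ofReal (t ^ (-(1:ℝ)/2)) * ENNReal.ofReal (|s| ^ (-α))) with hF1
  set F2 : ℝ → ℝ≥0∞ := fun s =>
    ENNReal.ofReal (gaussianPDFReal c (2*t).toNNReal s) * ENNReal.ofReal (t ^ (-α/2)) with hF2
  have hpt : ∀ s, ENNReal.ofReal (gaussianPDFReal c (2*t).toNNReal s)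
      * ENNReal.ofReal (|s| ^ (-α)) ≤ F1 s + F2 s := by
    intro s
    by_cases hs : s ∈ Set.Ioo (-u) u
    · refine le_trans ?_ (le_add_right le_rfl)
      rw [hF1, Set.indicator_of_mem hs]
      exact mul_le_mul_left (ENNReal.ofReal_le_ofReal (hg_le s)) _
    · refine le_trans ?_ (le_add_left le_rfl)
      exact mul_le_mul_right (ENNReal.ofReal_le_ofReal (habs_le s hs)) _
  have hF1m : Measurable F1 :=
    (measurable_const.mul (meas_absrpow α)).indicator measurableSet_Ioo
  calc ∫⁻ s, ENNReal.ofReal (gaussianPDFReal c (2*t).toNNReal s) * ENNReal.ofReal (|s| ^ (-α))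
      ≤ ∫⁻ s, (F1 s + F2 s) := lintegral_mono hpt
    _ = (∫⁻ s, F1 s) + ∫⁻ s, F2 s := lintegral_add_left hF1m _
    _ ≤ ENNReal.ofReal (2/(1-α)) * ENNReal.ofReal (t ^ (-α/2))
        + 1 * ENNReal.ofReal (t ^ (-α/2)) := by
        rw [one_mul]
        gcongr
        · -- ∫ F1
          rw [hF1, lintegral_indicator measurableSet_Ioo,
            lintegral_const_mul _ (meas_absrpow α)]
          calc ENNReal.ofReal (t ^ (-(1:ℝ)/2)) * ∫⁻ s in Set.Ioo (-u) u, ENNReal.ofReal (|s| ^ (-α))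
              ≤ ENNReal.ofReal (t ^ (-(1:ℝ)/2)) * ENNReal.ofReal (2/(1-α) * u ^ (1-α)) :=
                mul_le_mul_right (lintegral_Ioo_abs_rpow hα0 hα1 hu) _
            _ = ENNReal.ofReal (2/(1-α)) * ENNReal.ofReal (t ^ (-α/2)) := by
                rw [← ENNReal.ofReal_mul (Real.rpow_nonneg ht.le _), hut,
                  ← ENNReal.ofReal_mul (by positivity)]
                congr 1
                rw [mul_comm, mul_assoc, ← Real.rpow_add ht]
                congr 1
                ring
        · -- ∫ F2
          rw [hF2, lintegral_mul_const _ (measurable_gaussianPDFReal _ _).ennreal_ofReal,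
            lintegral_gaussianPDFReal_eq_one c hvne, one_mul]
    _ = ENNReal.ofReal (2/(1-α) + 1) * ENNReal.ofReal (t ^ (-α/2)) := by
        rw [ENNReal.ofReal_add (by positivity) zero_le_one, ENNReal.ofReal_one, add_mul, one_mul]
lemma heatSem_le (d : ℕ) (i0 : Fin d) {α t : ℝ} (hα0 : 0 < α) (hα1 : α < 1) (ht : 0 < t)
    (x : E d) :
    heatSem d t (fun y => ENNReal.ofReal (|y i0| ^ (-α))) x
      ≤ ENNReal.ofReal (2/(1-α) + 1) * ENNReal.ofReal (t ^ (-α/2)) := by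
  unfold heatSem
  have hvne : (2*t).toNNReal ≠ 0 := by
    simp only [ne_eq, Real.toNNReal_eq_zero, not_le]; linarith
  have hmp := EuclideanSpace.volume_preserving_symm_measurableEquiv_toLp (Fin d)
  set f : Fin d → ℝ → ℝ≥0∞ := fun i s =>
    ENNReal.ofReal (gaussianPDFReal (x i) (2*t).toNNReal s)
      * (if i = i0 then ENNReal.ofReal (|s| ^ (-α)) else 1) with hf
  have hfm : ∀ i, Measurable (f i) := fun i => by
    apply (measurable_gaussianPDFReal _ _).ennreal_ofReal.mul
    by_cases h : i = i0 <;> simp [h, meas_absrpow α]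
  have hint : ∀ y : E d,
      ENNReal.ofReal (gaussK d 1 t (x - y)) * ENNReal.ofReal (|y i0| ^ (-α))
        = ∏ i, f i (y i) := by
    intro y
    rw [gaussK_eq_prod d ht x y, hf]
    simp only []
    rw [Finset.prod_mul_distrib,
      ENNReal.ofReal_prod_of_nonneg (fun i _ => gaussianPDFReal_nonneg _ _ _),
      Finset.prod_ite_eq' Finset.univ i0 (fun i => ENNReal.ofReal (|y i| ^ (-α)))]
    simp
  calc ∫⁻ y, ENNReal.ofReal (gaussK d 1 t (x - y)) * ENNReal.ofReal (|y i0| ^ (-α))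
      = ∫⁻ w : Fin d → ℝ, ∏ i, f i (w i) := by
        rw [← hmp.lintegral_comp (f := fun w : Fin d → ℝ => ∏ i, f i (w i))
          (Finset.measurable_prod _ fun i _ => (hfm i).comp (measurable_pi_apply i))]
        exact lintegral_congr fun y => hint y
    _ = ∏ i, ∫⁻ s, f i s := lintegral_pi_prod f hfm
    _ ≤ ENNReal.ofReal (2/(1-α) + 1) * ENNReal.ofReal (t ^ (-α/2)) := by
        rw [← Finset.mul_prod_erase Finset.univ _ (Finset.mem_univ i0)]
        have h1 : ∀ i ∈ Finset.univ.erase i0, ∫⁻ s, f i s = 1 := by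
          intro i hi
          simp only [hf, if_neg (Finset.mem_erase.1 hi).1, mul_one]
          exact lintegral_gaussianPDFReal_eq_one _ hvne
        rw [Finset.prod_congr rfl h1, Finset.prod_const_one, mul_one]
        simpa [hf] using lemA hα0 hα1 ht (x i0)

/-- For `d ≥ 3`, `p > 1` and `1/p ≤ α < 1`, the function
`b(x) = 1_{B(0,1)}(x) |x₁|^{-α}` has `κ_{d+1}(b,h) < ∞` for every `h > 0`
(so `b ∈ K^{d+1}`), but `∫_{B(0,1)} b^p dx = ∞` (so `b ∉ L^p_loc`). -/
theorem Kato_not_subset_Lp (d : ℕ) (hd : 3 ≤ d) (p α : ℝ)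
    (hp : 1 < p) (hα1 : 1 / p ≤ α) (hα2 : α < 1)
    (b : E d → ℝ)
    (hbval : b = fun x : E d =>
      Set.indicator (Metric.ball (0 : E d) 1)
        (fun x => (abs (x ⟨0, by omega⟩)) ^ (-α)) x) :
    (∀ h > (0 : ℝ), katoNormScalar d b h < ⊤) ∧
      ∫⁻ x in Metric.ball (0 : E d) 1, ENNReal.ofReal (b x ^ p) = ⊤ := by
  subst hbval
  set i0 : Fin d := ⟨0, by omega⟩ with hi0
  have hα0 : 0 < α := lt_of_lt_of_le (by positivity) hα1
  have hb_le : ∀ y : E d,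
      Set.indicator (Metric.ball (0 : E d) 1) (fun x => |x i0| ^ (-α)) y ≤ |y i0| ^ (-α) :=
    fun y => Set.indicator_apply_le' (fun _ => le_rfl)
      (fun _ => Real.rpow_nonneg (abs_nonneg _) _)
  constructor
  · -- Kato norm finite
    intro h hh
    set C : ℝ := 2/(1-α) + 1 with hC
    refine lt_of_le_of_lt (iSup_le fun x => ?_)
      (show ENNReal.ofReal C * ∫⁻ t in Set.Ioc (0:ℝ) h, ENNReal.ofReal (t ^ (-(α+1)/2)) < ⊤ from ?_)
    · calc ∫⁻ t in Set.Ioc (0:ℝ) h,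
            heatSem d t (fun y => ENNReal.ofReal
              (Set.indicator (Metric.ball (0 : E d) 1) (fun x => |x i0| ^ (-α)) y)) x
            * ENNReal.ofReal (t ^ (-(1:ℝ)/2))
          ≤ ∫⁻ t in Set.Ioc (0:ℝ) h,
            (ENNReal.ofReal C * ENNReal.ofReal (t ^ (-α/2))) * ENNReal.ofReal (t ^ (-(1:ℝ)/2)) := by
            refine setLIntegral_mono
              ((measurable_const.mul ((measurable_id.pow measurable_const).ennreal_ofReal)).mul
                ((measurable_id.pow measurable_const).ennreal_ofReal)) (fun t htm => ?_)
            refine mul_le_mul_left ?_ _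
            refine le_trans ?_ (heatSem_le d i0 hα0 hα2 htm.1 x)
            exact lintegral_mono fun y =>
              mul_le_mul_right (ENNReal.ofReal_le_ofReal (hb_le y)) _
        _ = ENNReal.ofReal C * ∫⁻ t in Set.Ioc (0:ℝ) h, ENNReal.ofReal (t ^ (-(α+1)/2)) := by
            rw [← lintegral_const_mul _ (show Measurable fun t : ℝ =>
              ENNReal.ofReal (t ^ (-(α+1)/2)) from
              (measurable_id.pow measurable_const).ennreal_ofReal)]
            refine setLIntegral_congr_fun measurableSet_Ioc (fun t htm => ?_)
            rw [mul_assoc, ← ENNReal.ofReal_mul (Real.rpow_nonneg htm.1.le _),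
              ← Real.rpow_add htm.1]
            congr 2
            ring
    · have hint : IntegrableOn (fun t : ℝ => t ^ (-(α+1)/2)) (Set.Ioc 0 h) volume :=
        (intervalIntegrable_iff_integrableOn_Ioc_of_le hh.le).1
          (intervalIntegral.intervalIntegrable_rpow' (by linarith))
      exact ENNReal.mul_lt_top ENNReal.ofReal_lt_top hint.lintegral_lt_top
  · -- not in L^p
    set q : ℝ := α * p with hq
    have hq1 : 1 ≤ q := by
      rw [div_le_iff₀ (by linarith)] at hα1; linarith
    set r : ℝ := 1/(d:ℝ) with hr
    have hd3 : (3:ℝ) ≤ (d:ℝ) := by exact_mod_cast hd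
    have hdr : (0:ℝ) < d := by linarith
    have hrpos : 0 < r := by positivity
    set e := (MeasurableEquiv.toLp 2 (Fin d → ℝ)).symm with he
    set S : Set (Fin d → ℝ) := Set.univ.pi fun _ => Set.Ioo (-r) r with hS
    set T : Set (E d) := ⇑e ⁻¹' S with hT
    have hSm : MeasurableSet S := MeasurableSet.univ_pi fun _ => measurableSet_Ioo
    have hTm : MeasurableSet T := hSm.preimage e.measurable
    haveI : Nonempty (Fin d) := ⟨i0⟩
    have hTball : T ⊆ Metric.ball (0 : E d) 1 := by
      intro y hy
      rw [mem_ball_zero_iff, EuclideanSpace.norm_eq]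
      have hyi : ∀ i, y i ∈ Set.Ioo (-r) r := fun i => Set.mem_univ_pi.1 hy i
      have hsum : ∑ i, ‖y i‖^2 < 1 := by
        calc ∑ i, ‖y i‖^2 < ∑ _i : Fin d, r^2 := by
              refine Finset.sum_lt_sum_of_nonempty Finset.univ_nonempty fun i _ => ?_
              rw [Real.norm_eq_abs, sq_abs]
              exact sq_lt_sq' (hyi i).1 (hyi i).2
          _ = (d:ℝ) * r^2 := by
              rw [Finset.sum_const, Finset.card_univ, Fintype.card_fin, nsmul_eq_mul]
          _ < 1 := by
              rw [hr, div_pow, one_pow, mul_one_div, div_lt_one (by positivity)]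
              nlinarith
      calc Real.sqrt (∑ i, ‖y i‖^2) < Real.sqrt 1 :=
            Real.sqrt_lt_sqrt (by positivity) hsum
        _ = 1 := Real.sqrt_one
    set f2 : Fin d → ℝ → ℝ≥0∞ := fun i =>
      Set.indicator (Set.Ioo (-r) r) (fun s => if i = i0 then ENNReal.ofReal (|s| ^ (-q)) else 1)
      with hf2
    have hf2m : ∀ i, Measurable (f2 i) := fun i => by
      refine Measurable.indicator ?_ measurableSet_Ioo
      by_cases hii : i = i0
      · simpa [hii] using
          (measurable_abs.pow (measurable_const (a := -q))).ennreal_ofReal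
      · simp [hii]
    have key : ∫⁻ x in T, ENNReal.ofReal (|x i0| ^ (-q)) = ⊤ := by
      rw [← lintegral_indicator hTm]
      have hrepr : ∀ y : E d,
          T.indicator (fun x => ENNReal.ofReal (|x i0| ^ (-q))) y = ∏ i, f2 i (y i) := by
        intro y
        by_cases hy : y ∈ T
        · rw [Set.indicator_of_mem hy]
          have hyi : ∀ i, y i ∈ Set.Ioo (-r) r := fun i => Set.mem_univ_pi.1 hy i
          rw [Finset.prod_congr rfl fun i _ => Set.indicator_of_mem (hyi i) _,
            Finset.prod_ite_eq' Finset.univ i0 (fun i => ENNReal.ofReal (|y i| ^ (-q)))]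
          simp
        · rw [Set.indicator_of_notMem hy]
          have : ∃ i, y i ∉ Set.Ioo (-r) r := by
            by_contra hcon
            push_neg at hcon
            exact hy (Set.mem_univ_pi.2 hcon)
          obtain ⟨i1, hi1⟩ := this
          symm
          refine Finset.prod_eq_zero (Finset.mem_univ i1) ?_
          rw [hf2]
          simp only []
          rw [Set.indicator_of_notMem hi1]
        -- done
      calc ∫⁻ y, T.indicator (fun x => ENNReal.ofReal (|x i0| ^ (-q))) y
          = ∫⁻ y : E d, ∏ i, f2 i (y i) := lintegral_congr hrepr
        _ = ∫⁻ w : Fin d → ℝ, ∏ i, f2 i (w i) :=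
            (EuclideanSpace.volume_preserving_symm_measurableEquiv_toLp (Fin d)).lintegral_comp
              (f := fun w : Fin d → ℝ => ∏ i, f2 i (w i))
              (Finset.measurable_prod _ fun i _ => (hf2m i).comp (measurable_pi_apply i))
        _ = ∏ i, ∫⁻ s, f2 i s := lintegral_pi_prod f2 hf2m
        _ = ⊤ := ?_
      rw [← Finset.mul_prod_erase Finset.univ _ (Finset.mem_univ i0)]
      have hfac0 : ∫⁻ s, f2 i0 s = ⊤ := by
        rw [hf2]
        simp only [if_pos rfl]
        rw [lintegral_indicator measurableSet_Ioo]
        have hsub : ∫⁻ s in Set.Ioo (0:ℝ) r, ENNReal.ofReal (|s| ^ (-q)) = ⊤ := by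
          rw [setLIntegral_congr_fun measurableSet_Ioo (
            (fun s hs => by rw [abs_of_pos hs.1] :
              ∀ s ∈ Set.Ioo (0:ℝ) r, ENNReal.ofReal (|s| ^ (-q)) = ENNReal.ofReal (s ^ (-q))))]
          by_contra hne
          have hfin : IntegrableOn (fun s : ℝ => s ^ (-q)) (Set.Ioo 0 r) volume := by
            constructor
            · exact (measurable_id.pow measurable_const).aestronglyMeasurable
            · refine (hasFiniteIntegral_iff_ofReal ?_).2 (lt_top_iff_ne_top.2 hne)
              exact (ae_restrict_mem measurableSet_Ioo).mono fun s hs =>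
                Real.rpow_nonneg hs.1.le _
          rw [intervalIntegral.integrableOn_Ioo_rpow_iff hrpos] at hfin
          linarith
        refine eq_top_iff.2 ?_
        rw [← hsub]
        exact lintegral_mono_set fun s hs => ⟨by linarith [hs.1, hrpos], hs.2⟩
      rw [hfac0]
      refine ENNReal.top_mul ?_
      rw [Finset.prod_congr rfl (fun i hi => show ∫⁻ s, f2 i s = ENNReal.ofReal (r - -r) by
        rw [hf2]
        simp only [if_neg (Finset.mem_erase.1 hi).1]
        rw [lintegral_indicator measurableSet_Ioo, setLIntegral_one, Real.volume_Ioo]),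
        Finset.prod_const]
      exact pow_ne_zero _ (by simp [ENNReal.ofReal_eq_zero]; linarith)
    refine eq_top_iff.2 ?_
    rw [← key]
    refine le_trans (le_of_eq ?_) (lintegral_mono_set hTball)
    refine (setLIntegral_congr_fun hTm fun y hy => ?_).symm
    have hbeta : (fun x : E d =>
        (Metric.ball (0:E d) 1).indicator (fun x => |x i0| ^ (-α)) x) y
        = |y i0| ^ (-α) := Set.indicator_of_mem (hTball hy) _
    rw [hbeta]
    congr 1
    rw [show -q = (-α) * p by rw [hq]; ring, Real.rpow_mul (abs_nonneg _)]
end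
end

section
/- Let d ≥ 1, let δ > 0 and h > 0, and let b : ℝ^d → ℝ^d be a measurable vector field with |b| ∈ L²_loc such that n_e(b, δh) < ∞. Then the localized Nash integrals vanish as the localization radius tends to infinity: lim_{R→∞} ∫_0^h t^{−1/2} sqrt( ∫_{|y| > R} k_δ(t,y) |b(y)|² dy ) dt = 0. -/
open MeasureTheory ENNReal

noncomputable section

/-- Joint measurability of the Gaussian kernel. -/
lemma gaussK_measurable (d : ℕ) (μ : ℝ) : Measurable fun p : ℝ × E d => gaussK d μ p.1 p.2 := by
  unfold gaussK
  exact ((measurable_const.mul measurable_fst).pow measurable_const).mul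
    (Real.measurable_exp.comp ((measurable_snd.norm.pow measurable_const).neg.div
      (measurable_const.mul measurable_fst)))

/-- Measurability in `t` of localized kernel integrals. -/
lemma measurable_kernel_setLIntegral (d : ℕ) (μ : ℝ) (b : E d → E d) (hb : Measurable b)
    {s : Set (E d)} (hs : MeasurableSet s) :
    Measurable fun t : ℝ =>
      ∫⁻ y in s, ENNReal.ofReal (gaussK d μ t y) * ENNReal.ofReal (‖b y‖ ^ 2) := by
  have hm : Measurable (Function.uncurry fun t (y : E d) =>
      ENNReal.ofReal (gaussK d μ t y) * ENNReal.ofReal (‖b y‖ ^ 2)) :=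
    (ENNReal.measurable_ofReal.comp (gaussK_measurable d μ)).mul
      (ENNReal.measurable_ofReal.comp (((hb.comp measurable_snd).norm.pow measurable_const)))
  have h1 : ∀ t : ℝ, (∫⁻ y in s, ENNReal.ofReal (gaussK d μ t y) * ENNReal.ofReal (‖b y‖ ^ 2))
      = ∫⁻ y, s.indicator (fun y => ENNReal.ofReal (gaussK d μ t y)
          * ENNReal.ofReal (‖b y‖ ^ 2)) y := fun t => (lintegral_indicator hs _).symm
  simp_rw [h1]
  apply Measurable.lintegral_prod_right
  have h2 : (Function.uncurry fun t (y : E d) => s.indicator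
      (fun y => ENNReal.ofReal (gaussK d μ t y) * ENNReal.ofReal (‖b y‖ ^ 2)) y)
      = (Prod.snd ⁻¹' s).indicator (Function.uncurry fun t (y : E d) =>
          ENNReal.ofReal (gaussK d μ t y) * ENNReal.ofReal (‖b y‖ ^ 2)) := by
    ext p
    by_cases h : p.2 ∈ s <;> simp [Function.uncurry, Set.indicator, h]
  rw [h2]
  exact hm.indicator (measurable_snd hs)

set_option maxHeartbeats 2000000 in
/-- If `n_e(b,δh) < ∞`, then the localized Nash integrals vanish as the
localization radius tends to infinity:
`lim_{R→∞} ∫₀^h t^{-1/2} sqrt(∫_{|y|>R} k_δ(t,y)|b(y)|² dy) dt = 0`. -/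
theorem localized_nash_vanishes (d : ℕ) (hd : 1 ≤ d) (δ h : ℝ) (hδ : 0 < δ) (hh : 0 < h)
    (b : E d → E d) (hb : Measurable b)
    (hb2 : LocallyIntegrable (fun x : E d => ‖b x‖ ^ 2) volume)
    (hnash : nashNorm d b (δ * h) ≠ ⊤) :
    Filter.Tendsto (fun R : ℝ =>
        ∫⁻ t in Set.Ioc (0 : ℝ) h,
          (∫⁻ y in {y : E d | R < ‖y‖},
              ENNReal.ofReal (gaussK d δ t y) * ENNReal.ofReal (‖b y‖ ^ 2)) ^ (1 / 2 : ℝ)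
            * ENNReal.ofReal (t ^ (-(1 : ℝ) / 2)))
      Filter.atTop (nhds 0) := by
  classical
  set f : ℝ → E d → ℝ≥0∞ :=
    fun t y => ENNReal.ofReal (gaussK d δ t y) * ENNReal.ofReal (‖b y‖ ^ 2) with hfdef
  set S : ℝ → Set (E d) := fun R => {y : E d | R < ‖y‖} with hSdef
  have hSmeas : ∀ R : ℝ, MeasurableSet (S R) := fun R =>
    (isOpen_lt continuous_const continuous_norm).measurableSet
  have hSanti : Antitone S := fun R₁ R₂ hR y hy => lt_of_le_of_lt hR hy
  -- the function being integrated, and the global bound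
  set Φ : ℝ → ℝ≥0∞ := fun R => ∫⁻ t in Set.Ioc (0 : ℝ) h,
      (∫⁻ y in S R, f t y) ^ (1 / 2 : ℝ) * ENNReal.ofReal (t ^ (-(1 : ℝ) / 2)) with hΦdef
  set B : ℝ → ℝ≥0∞ := fun t =>
      (∫⁻ y, f t y) ^ (1 / 2 : ℝ) * ENNReal.ofReal (t ^ (-(1 : ℝ) / 2)) with hBdef
  have hfmeas : ∀ t, Measurable (f t) := by
    intro t
    show Measurable fun y : E d =>
      ENNReal.ofReal (gaussK d δ t y) * ENNReal.ofReal (‖b y‖ ^ 2)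
    refine Measurable.mul (f := fun y => ENNReal.ofReal (gaussK d δ t y))
      (g := fun y => ENNReal.ofReal (‖b y‖ ^ 2)) ?_ ?_
    · apply ENNReal.measurable_ofReal.comp
      unfold gaussK
      exact measurable_const.mul (Real.measurable_exp.comp
        ((measurable_norm.pow measurable_const).neg.div measurable_const))
    · exact ENNReal.measurable_ofReal.comp (hb.norm.pow measurable_const)
  -- full-space integral is the heat semigroup at time δt
  have hfull : ∀ t : ℝ, (∫⁻ y, f t y) = heatSem d (δ * t) (bsq d b) 0 := by
    intro t
    unfold heatSem bsq
    apply lintegral_congr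
    intro y
    show ENNReal.ofReal (gaussK d δ t y) * ENNReal.ofReal (‖b y‖ ^ 2) = _
    have : gaussK d δ t y = gaussK d 1 (δ * t) ((0 : E d) - y) := by
      simp only [gaussK, zero_sub, norm_neg]
      norm_num
      ring_nf
    rw [this]
  -- measurability of the t-integrands
  have hfullmeas : Measurable fun t : ℝ => ∫⁻ y, f t y := by
    have h1 := measurable_kernel_setLIntegral d δ b hb (MeasurableSet.univ (α := E d))
    simp only [Measure.restrict_univ] at h1
    exact h1
  have hBmeas : Measurable B :=
    (hfullmeas.pow measurable_const).mul
      (ENNReal.measurable_ofReal.comp (measurable_id.pow measurable_const))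
  have hFmeas : ∀ R : ℝ, Measurable fun t =>
      (∫⁻ y in S R, f t y) ^ (1 / 2 : ℝ) * ENNReal.ofReal (t ^ (-(1 : ℝ) / 2)) := by
    intro R
    exact ((measurable_kernel_setLIntegral d δ b hb (hSmeas R)).pow measurable_const).mul
      (ENNReal.measurable_ofReal.comp (measurable_id.pow measurable_const))
  -- Step A: the bound has finite integral
  have hBfin : (∫⁻ t in Set.Ioc (0 : ℝ) h, B t) ≠ ⊤ := by
    set G : ℝ → ℝ≥0∞ := fun s =>
      (heatSem d s (bsq d b) 0) ^ (1 / 2 : ℝ) * ENNReal.ofReal (s ^ (-(1 : ℝ) / 2)) with hGdef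
    have hGmeas : Measurable G := by
      have h1 := measurable_kernel_setLIntegral d 1 b hb (MeasurableSet.univ (α := E d))
      simp only [Measure.restrict_univ] at h1
      have h2 : ∀ s : ℝ, heatSem d s (bsq d b) 0 =
          ∫⁻ y, ENNReal.ofReal (gaussK d 1 s y) * ENNReal.ofReal (‖b y‖ ^ 2) := by
        intro s
        unfold heatSem bsq
        apply lintegral_congr
        intro y
        simp [gaussK, zero_sub, norm_neg]
      rw [hGdef]
      simp only [h2]
      exact (h1.pow measurable_const).mul
        (ENNReal.measurable_ofReal.comp (measurable_id.pow measurable_const))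
    have key : ∀ t ∈ Set.Ioc (0 : ℝ) h,
        B t = ENNReal.ofReal (δ ^ (1 / 2 : ℝ)) * G (δ * t) := by
      intro t ht
      have ht0 : 0 < t := ht.1
      have hδt : (0 : ℝ) < δ * t := mul_pos hδ ht0
      have hr : t ^ (-(1 : ℝ) / 2) = δ ^ (1 / 2 : ℝ) * (δ * t) ^ (-(1 : ℝ) / 2) := by
        rw [Real.mul_rpow hδ.le ht0.le, ← mul_assoc, ← Real.rpow_add hδ]
        norm_num
      rw [hBdef]
      simp only
      rw [hfull t, hr, ENNReal.ofReal_mul (Real.rpow_nonneg hδ.le _), hGdef]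
      ring
    rw [setLIntegral_congr_fun measurableSet_Ioc key]
    have hGδ : Measurable fun t : ℝ => G (δ * t) := hGmeas.comp (measurable_const_mul δ)
    rw [lintegral_const_mul _ hGδ]
    have hmap : (fun t : ℝ => δ * t) ⁻¹' Set.Ioc (0 : ℝ) (δ * h) = Set.Ioc (0 : ℝ) h := by
      ext t
      simp only [Set.mem_preimage, Set.mem_Ioc]
      constructor
      · rintro ⟨h1, h2⟩
        refine ⟨?_, le_of_mul_le_mul_left h2 hδ⟩
        by_contra hcon
        push_neg at hcon
        nlinarith
      · rintro ⟨h1, h2⟩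
        exact ⟨mul_pos hδ h1, mul_le_mul_of_nonneg_left h2 hδ.le⟩
    have hchg : (∫⁻ t in Set.Ioc (0 : ℝ) h, G (δ * t)) =
        ENNReal.ofReal |δ⁻¹| * ∫⁻ s in Set.Ioc (0 : ℝ) (δ * h), G s := by
      rw [← hmap, ← setLIntegral_map measurableSet_Ioc hGmeas (measurable_const_mul δ),
        Real.map_volume_mul_left hδ.ne', Measure.restrict_smul, lintegral_smul_measure, smul_eq_mul]
    rw [hchg]
    have hle : (∫⁻ s in Set.Ioc (0 : ℝ) (δ * h), G s) ≤ nashNorm d b (δ * h) :=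
      le_iSup (fun x : E d => ∫⁻ t in Set.Ioc (0 : ℝ) (δ * h),
        (heatSem d t (bsq d b) x) ^ (1 / 2 : ℝ) * ENNReal.ofReal (t ^ (-(1 : ℝ) / 2))) (0 : E d)
    exact ENNReal.mul_ne_top ENNReal.ofReal_ne_top
      (ENNReal.mul_ne_top ENNReal.ofReal_ne_top (lt_of_le_of_lt hle hnash.lt_top).ne)
  -- Step D + E: convergence along natural numbers via dominated convergence
  have hseq : Filter.Tendsto (fun n : ℕ => Φ (n : ℝ)) Filter.atTop (nhds 0) := by
    have := tendsto_lintegral_of_dominated_convergence (μ := volume.restrict (Set.Ioc (0:ℝ) h))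
      (F := fun n : ℕ => fun t =>
        (∫⁻ y in S (n : ℝ), f t y) ^ (1 / 2 : ℝ) * ENNReal.ofReal (t ^ (-(1 : ℝ) / 2)))
      (f := fun _ => 0) (bound := B)
      (fun n => hFmeas (n : ℝ))
      (fun n => Filter.Eventually.of_forall fun t => by
        exact mul_le_mul_left (ENNReal.rpow_le_rpow
          (setLIntegral_le_lintegral _ _) (by norm_num)) _)
      hBfin
      ?_
    · simp only [lintegral_zero] at this
      exact this
    -- the a.e. pointwise limit
    have hae1 : ∀ᵐ t ∂(volume.restrict (Set.Ioc (0:ℝ) h)), B t < ⊤ := ae_lt_top hBmeas hBfin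
    have hae2 : ∀ᵐ t ∂(volume.restrict (Set.Ioc (0:ℝ) h)), t ∈ Set.Ioc (0:ℝ) h :=
      ae_restrict_mem measurableSet_Ioc
    filter_upwards [hae1, hae2] with t hBt ht
    have ht0 : 0 < t := ht.1
    have hc0 : ENNReal.ofReal (t ^ (-(1 : ℝ) / 2)) ≠ 0 := by
      simp only [ne_eq, ENNReal.ofReal_eq_zero, not_le]
      exact Real.rpow_pos_of_pos ht0 _
    have hfin : (∫⁻ y, f t y) ≠ ⊤ := by
      intro hcon
      rw [hBdef] at hBt
      simp only [hcon] at hBt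
      rw [ENNReal.top_rpow_of_pos (by norm_num), ENNReal.top_mul hc0] at hBt
      exact absurd hBt (lt_irrefl _)
    -- continuity from above of the measure with density f t
    set ν : Measure (E d) := volume.withDensity (f t) with hνdef
    have hν : ∀ R : ℝ, ν (S R) = ∫⁻ y in S R, f t y := fun R =>
      withDensity_apply _ (hSmeas R)
    have hνuniv : ν Set.univ = ∫⁻ y, f t y := by
      rw [withDensity_apply _ MeasurableSet.univ, Measure.restrict_univ]
    have hmeas0 : Filter.Tendsto (fun n : ℕ => ν (S (n : ℝ))) Filter.atTop (nhds 0) := by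
      have hiInter : (⋂ n : ℕ, S (n : ℝ)) = ∅ := by
        ext y
        simp only [Set.mem_iInter, Set.mem_empty_iff_false, iff_false, not_forall]
        obtain ⟨n, hn⟩ := exists_nat_gt ‖y‖
        exact ⟨n, by simp [hSdef, not_lt.mpr hn.le]⟩
      have := tendsto_measure_iInter_atTop (μ := ν) (s := fun n : ℕ => S (n : ℝ))
        (fun n => (hSmeas _).nullMeasurableSet)
        (fun n m hnm => hSanti (by exact_mod_cast hnm))
        ⟨0, by rw [hν]; exact ((setLIntegral_le_lintegral _ _).trans_lt hfin.lt_top).ne⟩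
      rw [hiInter, measure_empty] at this
      exact this
    simp_rw [← hν]
    have hrpow : Filter.Tendsto (fun n : ℕ => (ν (S (n : ℝ))) ^ (1 / 2 : ℝ))
        Filter.atTop (nhds 0) := by
      have := (ENNReal.continuous_rpow_const (y := (1 / 2 : ℝ))).tendsto 0
      have h0 : (0 : ℝ≥0∞) ^ (1 / 2 : ℝ) = 0 := ENNReal.zero_rpow_of_pos (by norm_num)
      rw [h0] at this
      exact this.comp hmeas0
    have := ENNReal.Tendsto.mul_const hrpow
      (Or.inr (ENNReal.ofReal_ne_top : ENNReal.ofReal (t ^ (-(1 : ℝ) / 2)) ≠ ⊤))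
    simpa using this
  -- Step F: from the sequential limit to the full limit, using antitonicity
  have hΦanti : Antitone Φ := by
    intro R₁ R₂ hR
    apply lintegral_mono
    intro t
    exact mul_le_mul_left (ENNReal.rpow_le_rpow
      (lintegral_mono_set (hSanti hR)) (by norm_num)) _
  rw [ENNReal.tendsto_nhds_zero]
  intro ε hε
  rw [ENNReal.tendsto_nhds_zero] at hseq
  obtain ⟨n, hn⟩ := (hseq ε hε).exists
  filter_upwards [Filter.eventually_ge_atTop (n : ℝ)] with R hR
  exact le_trans (hΦanti hR) hn
end
end
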